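/- arXiv:2411.19260 — 8 statements merged into one kernel-verified Lean document; each statement's English description precedes it below -/
import Mathlib

section
/- Let S be a numerical semigroup and h ∈ S nonzero. Define D(S,h) = ⋂_{γ ∈ Ap(S,h)} (γ + S). Then D(S,h) ⊆ (h + c - 1) + S, where c is the conductor of S; moreover equality D(S,h) = (h + c - 1) + S holds if and only if S is symmetric. -/
/-- For a numerical semigroup `S` with conductor `c` and nonzero `h ∈ S`,
the `S`-ideal `D(S,h) = ⋂_{γ ∈ Ap(S,h)} (γ + S)` is contained in the principal
ideal `(h + c - 1) + S`, with equality iff `S` is symmetric. -/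
theorem dedekind_ideal_subset (S : Set ℕ) (h0 : 0 ∈ S)
    (hadd : ∀ a ∈ S, ∀ b ∈ S, a + b ∈ S)
    (hfin : {n : ℕ | n ∉ S}.Finite)
    (c : ℕ) (hc : IsLeast {c' : ℕ | ∀ n ≥ c', n ∈ S} c)
    (h : ℕ) (hh : h ∈ S) (hh0 : h ≠ 0) :
    {z : ℤ | ∀ γ ∈ {w : ℕ | w ∈ S ∧ ¬ ∃ u ∈ S, w = u + h},
        ∃ t ∈ S, z = (γ : ℤ) + t} ⊆
      {z : ℤ | ∃ t ∈ S, z = (h : ℤ) + c - 1 + t} ∧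
    ({z : ℤ | ∀ γ ∈ {w : ℕ | w ∈ S ∧ ¬ ∃ u ∈ S, w = u + h},
        ∃ t ∈ S, z = (γ : ℤ) + t} =
      {z : ℤ | ∃ t ∈ S, z = (h : ℤ) + c - 1 + t} ↔
      (∀ x : ℤ, (∃ n ∈ S, (n : ℤ) = x) ↔ ¬ ∃ n ∈ S, (n : ℤ) = (c : ℤ) - 1 - x)) := by
  classical
  have hge : ∀ n ≥ c, n ∈ S := hc.1
  -- c - 1 ∉ S when c ≠ 0
  have hFnotS : c ≠ 0 → c - 1 ∉ S := by
    intro hc0 hmem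
    have hmem' : c - 1 ∈ {c' : ℕ | ∀ n ≥ c', n ∈ S} := by
      intro n hn
      rcases Nat.lt_or_ge n c with h' | h'
      · have : n = c - 1 := by omega
        rwa [this]
      · exact hge n h'
    have := hc.2 hmem'
    omega
  -- multiples of h are in S
  have hmul : ∀ k : ℕ, k * h ∈ S := by
    intro k
    induction k with
    | zero => simpa using h0
    | succ n ih =>
        have := hadd _ ih _ hh
        have heq : (n+1)*h = n*h + h := by ring
        rwa [heq]
  -- γ₀ := h + c - 1 is in the Apéry set
  have hγ₀S : h + c - 1 ∈ S := hge _ (by omega)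
  have hγ₀Ap : (h + c - 1) ∈ {w : ℕ | w ∈ S ∧ ¬ ∃ u ∈ S, w = u + h} := by
    refine ⟨hγ₀S, ?_⟩
    rintro ⟨u, huS, hu⟩
    have hc0 : c ≠ 0 := by omega
    have hu' : u = c - 1 := by omega
    exact hFnotS hc0 (hu' ▸ huS)
  -- the subset part
  have hsub : {z : ℤ | ∀ γ ∈ {w : ℕ | w ∈ S ∧ ¬ ∃ u ∈ S, w = u + h},
        ∃ t ∈ S, z = (γ : ℤ) + t} ⊆
      {z : ℤ | ∃ t ∈ S, z = (h : ℤ) + c - 1 + t} := by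
    intro z hz
    obtain ⟨t, ht, hzt⟩ := hz _ hγ₀Ap
    refine ⟨t, ht, ?_⟩
    have hne : h ≠ 0 := hh0
    omega
  refine ⟨hsub, ?_, ?_⟩
  · -- equality → symmetric
    intro heq x
    have hmemD : ((h : ℤ) + c - 1) ∈ {z : ℤ | ∀ γ ∈ {w : ℕ | w ∈ S ∧ ¬ ∃ u ∈ S, w = u + h},
        ∃ t ∈ S, z = (γ : ℤ) + t} := by
      rw [heq]
      exact ⟨0, h0, by push_cast; ring⟩
    have key : ∀ γ ∈ {w : ℕ | w ∈ S ∧ ¬ ∃ u ∈ S, w = u + h},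
        ∃ n ∈ S, (n : ℤ) = (h : ℤ) + c - 1 - γ := by
      intro γ hγ
      obtain ⟨t, ht, hzt⟩ := hmemD γ hγ
      exact ⟨t, ht, by omega⟩
    constructor
    · rintro ⟨n, hn, rfl⟩ ⟨m, hm, hm'⟩
      have hc0 : c ≠ 0 := by omega
      have hnm : n + m = c - 1 := by omega
      exact hFnotS hc0 (hnm ▸ hadd n hn m hm)
    · intro hx
      by_contra hnx
      have hx0 : 0 ≤ x := by
        by_contra h'
        exact hx ⟨((c : ℤ) - 1 - x).toNat, hge _ (by omega), by omega⟩
      have hxc : x < c := by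
        by_contra h'
        exact hnx ⟨x.toNat, hge _ (by omega), by omega⟩
      set y : ℕ := ((c : ℤ) - 1 - x).toNat with hy
      have hyx : (y : ℤ) = (c : ℤ) - 1 - x := by omega
      have hyS : y ∉ S := fun hmem => hx ⟨y, hmem, hyx⟩
      have hex : ∃ k, (k + 1) * h + y ∈ S := by
        refine ⟨c, hge _ ?_⟩
        have h1 : c + 1 ≤ (c + 1) * h := Nat.le_mul_of_pos_right _ (Nat.pos_of_ne_zero hh0)
        omega
      set k := Nat.find hex with hk
      have hkS : (k + 1) * h + y ∈ S := Nat.find_spec hex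
      set m : ℕ := k * h with hm
      have hmS : m ∈ S := hmul k
      have hexp : (k + 1) * h = m + h := by rw [hm]; ring
      have hγS : m + h + y ∈ S := by
        have : (k + 1) * h + y = m + h + y := by omega
        rwa [this] at hkS
      have hγAp : (m + h + y) ∈ {w : ℕ | w ∈ S ∧ ¬ ∃ u ∈ S, w = u + h} := by
        refine ⟨hγS, ?_⟩
        rintro ⟨u, huS, hu⟩
        have hu' : u = m + y := by omega
        subst hu'
        rcases Nat.eq_zero_or_pos k with hk0 | hkpos
        · have : m = 0 := by rw [hm, hk0]; ring
          rw [this] at huS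
          exact hyS (by simpa using huS)
        · have hlt : k - 1 < k := by omega
          have := Nat.find_min hex hlt
          have hkk : (k - 1 + 1) * h = m := by
            rw [hm]
            have : k - 1 + 1 = k := by omega
            rw [this]
          exact this (by rw [hkk]; simpa using huS)
      obtain ⟨n, hn, hn'⟩ := key _ hγAp
      refine hnx ⟨n + m, hadd n hn m hmS, ?_⟩
      push_cast at hn' ⊢
      omega
  · -- symmetric → equality
    intro hsym
    refine Set.Subset.antisymm hsub ?_
    rintro z ⟨t, ht, hzt⟩ γ ⟨hγS, hγAp⟩
    have h1 : ¬∃ n ∈ S, (n : ℤ) = (c : ℤ) - 1 - ((c : ℤ) - 1 + h - γ) := by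
      rintro ⟨n, hn, hn'⟩
      exact hγAp ⟨n, hn, by omega⟩
    obtain ⟨n, hn, hn'⟩ := (hsym ((c : ℤ) - 1 + h - γ)).mpr h1
    refine ⟨n + t, hadd n hn t ht, ?_⟩
    push_cast
    omega
end

section
/- Let S be a numerical semigroup that is not symmetric, and let h ∈ S be nonzero. Then the S-ideal D(S,h) = ⋂_{γ ∈ Ap(S,h)} (γ + S) is not a principal S-ideal, i.e., there is no m ∈ ℤ with D(S,h) = m + S. -/
/-- If a numerical semigroup `S` is not symmetric, then for nonzero `h ∈ S`
the `S`-ideal `D(S,h) = ⋂_{γ ∈ Ap(S,h)} (γ + S)` is not principal. -/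
theorem dedekind_ideal_not_principal (S : Set ℕ) (h0 : 0 ∈ S)
    (hadd : ∀ a ∈ S, ∀ b ∈ S, a + b ∈ S)
    (hfin : {n : ℕ | n ∉ S}.Finite)
    (c : ℕ) (hc : IsLeast {c' : ℕ | ∀ n ≥ c', n ∈ S} c)
    (hnotsym : ¬ (∀ x : ℤ, (∃ n ∈ S, (n : ℤ) = x) ↔
        ¬ ∃ n ∈ S, (n : ℤ) = (c : ℤ) - 1 - x))
    (h : ℕ) (hh : h ∈ S) (hh0 : h ≠ 0) :
    ¬ ∃ m : ℤ, {z : ℤ | ∀ γ ∈ {w : ℕ | w ∈ S ∧ ¬ ∃ u ∈ S, w = u + h},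
        ∃ t ∈ S, z = (γ : ℤ) + t} = {z : ℤ | ∃ t ∈ S, z = m + t} := by
  classical
  rintro ⟨m, hm⟩
  have key : ∀ z : ℤ,
      (∀ γ : ℕ, (γ ∈ S ∧ ¬ ∃ u ∈ S, γ = u + h) → ∃ t ∈ S, z = (γ : ℤ) + t) ↔
      (∃ t ∈ S, z = m + t) := by
    intro z
    have := Set.ext_iff.mp hm z
    simpa [Set.mem_setOf_eq] using this
  -- case c = 0 : S = ℕ is symmetric
  rcases Nat.eq_zero_or_pos c with hc0 | hc1
  · apply hnotsym
    intro x
    have hall : ∀ n : ℕ, n ∈ S := fun n => hc.1 n (by omega)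
    constructor
    · rintro ⟨n, hn, rfl⟩ ⟨n', hn', he⟩
      omega
    · intro hx
      have hxnn : 0 ≤ x := by
        by_contra hneg
        push_neg at hneg
        exact hx ⟨((c : ℤ) - 1 - x).toNat, hall _, by omega⟩
      exact ⟨x.toNat, hall _, by omega⟩
  -- now c ≥ 1, set f := c - 1, the Frobenius number
  set f := c - 1 with hfdef
  have hf : f ∉ S := by
    intro hfS
    have hle : c ≤ f := hc.2 (fun n hn => by
      rcases Nat.eq_or_lt_of_le hn with heq | hlt
      · exact heq ▸ hfS
      · exact hc.1 n (by omega))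
    omega
  have hh1 : 1 ≤ h := Nat.one_le_iff_ne_zero.2 hh0
  have hkh : ∀ k : ℕ, k * h ∈ S := by
    intro k
    induction k with
    | zero => simpa using h0
    | succ n ih =>
        have := hadd _ ih _ hh
        simpa [Nat.succ_mul] using this
  have hfhS : f + h ∈ S := hc.1 _ (by omega)
  have hfhAp : (f + h ∈ S ∧ ¬ ∃ u ∈ S, f + h = u + h) := by
    refine ⟨hfhS, ?_⟩
    rintro ⟨u, hu, he⟩
    have : u = f := by omega
    exact hf (this ▸ hu)
  have hApLe : ∀ γ : ℕ, γ ∈ S → (¬ ∃ u ∈ S, γ = u + h) → γ ≤ f + h := by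
    intro γ hγ hap
    by_contra hgt
    push_neg at hgt
    exact hap ⟨γ - h, hc.1 _ (by omega), by omega⟩
  -- 2f + h is not in the ideal D
  have h2fh_not : ¬ (∃ t ∈ S, ((2 * f + h : ℕ) : ℤ) = m + t) := by
    rw [← key]
    intro hL
    obtain ⟨t, ht, he⟩ := hL (f + h) hfhAp
    have : t = f := by omega
    exact hf (this ▸ ht)
  -- everything above 2f + h is in the ideal D
  have hbig : ∀ z : ℤ, ((2 * f + h : ℕ) : ℤ) < z → ∃ t ∈ S, z = m + t := by
    intro z hz
    rw [← key]
    intro γ hγ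
    have hγle := hApLe γ hγ.1 hγ.2
    refine ⟨(z - γ).toNat, hc.1 _ (by omega), by omega⟩
  -- determine m
  have hm_le : m ≤ (f : ℤ) + h := by
    by_contra hgt
    push_neg at hgt
    obtain ⟨t, ht, he⟩ := hbig (m + f) (by omega)
    have : t = f := by omega
    exact hf (this ▸ ht)
  have hm_ge : (f : ℤ) + h ≤ m := by
    by_contra hlt
    push_neg at hlt
    exact h2fh_not ⟨(2 * (f : ℤ) + h - m).toNat, hc.1 _ (by omega), by omega⟩
  have hmeq : m = (f : ℤ) + h := le_antisymm hm_le hm_ge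
  -- m belongs to D, so the Apéry set is "symmetric"
  have hmD : ∀ γ : ℕ, (γ ∈ S ∧ ¬ ∃ u ∈ S, γ = u + h) → ∃ t ∈ S, m = (γ : ℤ) + t :=
    (key m).mpr ⟨0, h0, by push_cast; ring⟩
  -- derive symmetry of S, contradiction
  apply hnotsym
  intro x
  constructor
  · rintro ⟨n, hn, rfl⟩ ⟨n', hn', he⟩
    have hnn : n + n' = f := by omega
    exact hf (hnn ▸ hadd n hn n' hn')
  · intro hx
    by_cases hxc : (c : ℤ) ≤ x
    · exact ⟨x.toNat, hc.1 _ (by omega), by omega⟩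
    · push_neg at hxc
      have hxnn : 0 ≤ x := by
        by_contra hneg
        push_neg at hneg
        exact hx ⟨((c : ℤ) - 1 - x).toNat, hc.1 _ (by omega), by omega⟩
      set y : ℕ := ((c : ℤ) - 1 - x).toNat with hy
      have hyx : (y : ℤ) = (c : ℤ) - 1 - x := by omega
      have hyS : y ∉ S := fun hyy => hx ⟨y, hyy, by omega⟩
      have hex : ∃ k : ℕ, y + k * h ∈ S := by
        refine ⟨c, hc.1 _ ?_⟩
        have : c ≤ c * h := Nat.le_mul_of_pos_right c (by omega)
        omega
      let k1 := Nat.find hex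
      have hk1S : y + k1 * h ∈ S := Nat.find_spec hex
      have hk1pos : k1 ≠ 0 := by
        intro h'
        apply hyS
        simpa [h'] using hk1S
      have hkn : y + (k1 - 1) * h ∉ S := Nat.find_min hex (by omega)
      have hKeq : k1 * h = (k1 - 1) * h + h := by
        have h1 : k1 = (k1 - 1) + 1 := by omega
        calc k1 * h = ((k1 - 1) + 1) * h := by rw [← h1]
        _ = (k1 - 1) * h + h := by rw [add_mul, one_mul]
      have hwAp : (y + k1 * h ∈ S ∧ ¬ ∃ u ∈ S, y + k1 * h = u + h) := by
        refine ⟨hk1S, ?_⟩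
        rintro ⟨u, hu, he⟩
        have : u = y + (k1 - 1) * h := by omega
        exact hkn (this ▸ hu)
      obtain ⟨t, ht, hte⟩ := hmD _ hwAp
      refine ⟨t + (k1 - 1) * h, hadd _ ht _ (hkh _), ?_⟩
      -- hte : m = ↑(y + k1*h) + ↑t, with m = f + h and k1*h = (k1-1)*h + h
      have hte' : m = (y : ℤ) + (k1 * h : ℕ) + t := by push_cast at hte ⊢; omega
      push_cast
      omega
end

section
/- Let S = ⟨a, b⟩ be a numerical semigroup generated by two coprime integers a, b ≥ 2. Then the generating series of S satisfies (∑_{s∈S} t^s) = (1 - t^{ab}) / ((1 - t^a)(1 - t^b)) as formal power series over ℤ. -/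
open PowerSeries Finset

/-- Uniqueness of representations with small `y`-coordinate. -/
lemma rep_uniq {a b : ℕ} (hab : Nat.Coprime a b) (ha : 0 < a) {x1 y1 x2 y2 : ℕ}
    (h1 : y1 < a) (h2 : y2 < a) (h : x1 * a + y1 * b = x2 * a + y2 * b) :
    y1 = y2 ∧ x1 = x2 := by
  have hco : IsCoprime (a : ℤ) (b : ℤ) := Nat.isCoprime_iff_coprime.mpr hab
  have hz : (x1 : ℤ) * a + y1 * b = x2 * a + y2 * b := by exact_mod_cast h
  have hdvd : (a : ℤ) ∣ ((y1 : ℤ) - y2) * b := ⟨(x2 : ℤ) - x1, by linarith⟩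
  have hdvd2 : (a : ℤ) ∣ ((y1 : ℤ) - y2) := hco.dvd_of_dvd_mul_right hdvd
  have hy : (y1 : ℤ) - y2 = 0 := Int.eq_zero_of_abs_lt_dvd hdvd2 (by
    rw [abs_lt]; constructor <;> [push_cast; push_cast] <;> omega)
  have hy' : y1 = y2 := by omega
  subst hy'
  have hx : (x1 : ℤ) * a = x2 * a := by linarith
  have : x1 = x2 := by
    have := mul_right_cancel₀ (a := (x1 : ℤ)) (b := (a : ℤ)) (c := x2)
      (by exact_mod_cast ha.ne') hx
    exact_mod_cast this
  exact ⟨rfl, this⟩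

/-- Every representation can be normalized to have `y < a`. -/
lemma rep_normalize {a : ℕ} (ha : 0 < a) (b x y : ℕ) :
    ∃ x' y', y' < a ∧ x * a + y * b = x' * a + y' * b := by
  obtain ⟨q, r, hr, rfl⟩ : ∃ q r, r < a ∧ y = a * q + r :=
    ⟨y / a, y % a, Nat.mod_lt _ ha, (Nat.div_add_mod y a).symm⟩
  exact ⟨x + q * b, r, hr, by ring⟩

open Classical in
/-- Key arithmetic identity for the coefficients. -/
lemma key {a b : ℕ} (ha : 0 < a) (hb : 0 < b) (hab : Nat.Coprime a b) (n : ℕ) :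
    (if ∃ x y : ℕ, n = x * a + y * b then (1 : ℤ) else 0) -
      (if a ≤ n ∧ ∃ x y : ℕ, n - a = x * a + y * b then (1 : ℤ) else 0) =
      if ∃ y < a, n = y * b then 1 else 0 := by
  by_cases hn : ∃ x y : ℕ, n = x * a + y * b
  · obtain ⟨x0, y0, hxy0⟩ := hn
    obtain ⟨x, y, hy, hrep⟩ := rep_normalize ha b x0 y0
    rw [hrep] at hxy0
    rcases Nat.eq_zero_or_pos x with hx | hx
    · subst hx
      simp only [Nat.zero_mul, Nat.zero_add] at hxy0
      have hA : ∃ x y : ℕ, n = x * a + y * b := ⟨0, y, by simpa using hxy0⟩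
      have hC : ∃ y' < a, n = y' * b := ⟨y, hy, hxy0⟩
      have hB : ¬(a ≤ n ∧ ∃ x y : ℕ, n - a = x * a + y * b) := by
        rintro ⟨han, x', y', h'⟩
        obtain ⟨x'', y'', hy'', hrep''⟩ := rep_normalize ha b x' y'
        rw [hrep''] at h'
        have heq : (x'' + 1) * a + y'' * b = 0 * a + y * b := by
          have e1 : (x'' + 1) * a = x'' * a + a := by ring
          have e2 : (0 : ℕ) * a = 0 := by ring
          omega
        have := rep_uniq hab ha hy'' hy heq
        omega
      rw [if_pos hA, if_pos hC, if_neg hB]; ring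
    · obtain ⟨k, rfl⟩ : ∃ k, x = k + 1 := ⟨x - 1, by omega⟩
      have e1 : (k + 1) * a = k * a + a := by ring
      have hA : ∃ x y : ℕ, n = x * a + y * b := ⟨k + 1, y, hxy0⟩
      have hB : a ≤ n ∧ ∃ x y : ℕ, n - a = x * a + y * b :=
        ⟨by omega, k, y, by omega⟩
      have hC : ¬∃ y' < a, n = y' * b := by
        rintro ⟨y', hy', h'⟩
        have heq : (0 : ℕ) * a + y' * b = (k + 1) * a + y * b := by
          have e2 : (0 : ℕ) * a = 0 := by ring
          omega
        have := rep_uniq hab ha hy' hy heq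
        omega
      rw [if_pos hA, if_pos hB, if_neg hC]; ring
  · have hB : ¬(a ≤ n ∧ ∃ x y : ℕ, n - a = x * a + y * b) := by
      rintro ⟨han, x', y', h'⟩
      refine hn ⟨x' + 1, y', ?_⟩
      have e1 : (x' + 1) * a = x' * a + a := by ring
      omega
    have hC : ¬∃ y' < a, n = y' * b := by
      rintro ⟨y', _, h'⟩
      exact hn ⟨0, y', by simpa using h'⟩
    rw [if_neg hn, if_neg hB, if_neg hC]; ring

open Classical in
/-- For coprime `a, b ≥ 2` and `S = ⟨a, b⟩`, the generating series of `S`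
satisfies `P_S(t) · (1 - t^a)(1 - t^b) = 1 - t^{ab}` in `ℤ⟦t⟧`, i.e.
`P_S(t) = (1 - t^{ab}) / ((1 - t^a)(1 - t^b))`. -/
theorem generating_series_two_generators (a b : ℕ) (ha : 2 ≤ a) (hb : 2 ≤ b)
    (hab : Nat.Coprime a b) :
    (PowerSeries.mk fun n : ℕ => if ∃ x y : ℕ, n = x * a + y * b then (1 : ℤ) else 0) *
      ((1 - (PowerSeries.X : PowerSeries ℤ) ^ a) * (1 - (PowerSeries.X : PowerSeries ℤ) ^ b)) =
      1 - (PowerSeries.X : PowerSeries ℤ) ^ (a * b) := by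
  have ha0 : 0 < a := by omega
  have hb0 : 0 < b := by omega
  have h1 : (PowerSeries.mk fun n : ℕ =>
        if ∃ x y : ℕ, n = x * a + y * b then (1 : ℤ) else 0) * (1 - (X : PowerSeries ℤ) ^ a)
      = ∑ y ∈ range a, (X : PowerSeries ℤ) ^ (y * b) := by
    ext n
    rw [mul_sub, mul_one, map_sub, PowerSeries.coeff_mul_X_pow', map_sum]
    simp only [PowerSeries.coeff_X_pow, PowerSeries.coeff_mk]
    have hnest : (if a ≤ n then (if ∃ x y : ℕ, n - a = x * a + y * b then (1 : ℤ) else 0) else 0)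
        = if a ≤ n ∧ ∃ x y : ℕ, n - a = x * a + y * b then (1 : ℤ) else 0 := by
      by_cases h1 : a ≤ n
      · by_cases h2 : ∃ x y : ℕ, n - a = x * a + y * b
        · rw [if_pos h1, if_pos h2, if_pos ⟨h1, h2⟩]
        · exact if_pos h1 ▸ if_neg h2 ▸ (if_neg (fun hc => h2 hc.2)).symm
      · exact if_neg h1 ▸ (if_neg (fun hc => h1 hc.1)).symm
    rw [hnest]
    have hsum : (∑ y ∈ range a, if n = y * b then (1 : ℤ) else 0)
        = if ∃ y < a, n = y * b then 1 else 0 := by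
      by_cases h : ∃ y < a, n = y * b
      · obtain ⟨y0, hy0, hn0⟩ := h
        rw [if_pos ⟨y0, hy0, hn0⟩, Finset.sum_eq_single y0]
        · rw [if_pos hn0]
        · intro y hy hne
          rw [if_neg]
          intro hc
          exact hne (Nat.eq_of_mul_eq_mul_right hb0 (by omega)).symm
        · intro hc; exact absurd (Finset.mem_range.mpr hy0) hc
      · rw [if_neg h]
        apply Finset.sum_eq_zero
        intro y hy
        rw [if_neg]
        intro hc
        exact h ⟨y, Finset.mem_range.mp hy, hc⟩
    rw [hsum]
    exact key ha0 hb0 hab n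
  have h2 : (∑ y ∈ range a, (X : PowerSeries ℤ) ^ (y * b)) * (1 - (X : PowerSeries ℤ) ^ b)
      = 1 - (X : PowerSeries ℤ) ^ (a * b) := by
    have hg := geom_sum_mul ((X : PowerSeries ℤ) ^ b) a
    have hs : ∑ y ∈ range a, (X : PowerSeries ℤ) ^ (y * b)
        = ∑ i ∈ range a, ((X : PowerSeries ℤ) ^ b) ^ i := by
      apply Finset.sum_congr rfl
      intro i _
      rw [← pow_mul, mul_comm]
    rw [hs, mul_comm a b, pow_mul]
    linear_combination -hg
  calc (PowerSeries.mk fun n : ℕ =>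
        if ∃ x y : ℕ, n = x * a + y * b then (1 : ℤ) else 0) *
        ((1 - (X : PowerSeries ℤ) ^ a) * (1 - (X : PowerSeries ℤ) ^ b))
      = ((PowerSeries.mk fun n : ℕ =>
        if ∃ x y : ℕ, n = x * a + y * b then (1 : ℤ) else 0) *
        (1 - (X : PowerSeries ℤ) ^ a)) * (1 - (X : PowerSeries ℤ) ^ b) := by ring
    _ = 1 - (X : PowerSeries ℤ) ^ (a * b) := by rw [h1, h2]
end

section
/- Let S₁, S₂ be numerical semigroups, let d₁ ∈ S₂ and d₂ ∈ S₁ with gcd(d₁, d₂) = 1, and let S = d₁S₁ + d₂S₂ = {d₁x + d₂y : x ∈ S₁, y ∈ S₂} (the gluing of S₁ and S₂). Then the generating series satisfy P_S(t) = (1 - t^{d₁d₂}) · P_{S₁}(t^{d₁}) · P_{S₂}(t^{d₂}), where P_T(t) = ∑_{s∈T} t^s. -/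
open Finset

open Classical in
private lemma gluing_count (S₁ S₂ : Set ℕ)
    (hadd1 : ∀ a ∈ S₁, ∀ b ∈ S₁, a + b ∈ S₁)
    (hadd2 : ∀ a ∈ S₂, ∀ b ∈ S₂, a + b ∈ S₂)
    (d₁ d₂ : ℕ) (hd₁ : d₁ ∈ S₂) (hd₂ : d₂ ∈ S₁)
    (h1 : 0 < d₁) (h2 : 0 < d₂) (hcop : Nat.Coprime d₁ d₂) (n : ℕ) :
    ((antidiagonal n).filter
        (fun p => (∃ x ∈ S₁, p.1 = d₁ * x) ∧ ∃ y ∈ S₂, p.2 = d₂ * y)).card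
      = (if d₁ * d₂ ≤ n then
          ((antidiagonal (n - d₁ * d₂)).filter
            (fun p => (∃ x ∈ S₁, p.1 = d₁ * x) ∧ ∃ y ∈ S₂, p.2 = d₂ * y)).card
         else 0)
        + (if ∃ x ∈ S₁, ∃ y ∈ S₂, n = d₁ * x + d₂ * y then 1 else 0) := by
  classical
  set m := d₁ * d₂ with hm
  set pred : ℕ × ℕ → Prop :=
    fun p => (∃ x ∈ S₁, p.1 = d₁ * x) ∧ ∃ y ∈ S₂, p.2 = d₂ * y with hpredd
  set Q : ℕ × ℕ → Prop := fun p => ∃ x ∈ S₁, p.1 = d₁ * x + m with hQQ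
  have hstep : ∀ j x, x ∈ S₁ → x + d₂ * j ∈ S₁ := by
    intro j
    induction j with
    | zero => intro x hx; simpa using hx
    | succ k ih =>
        intro x hx
        have : x + d₂ * k + d₂ ∈ S₁ := hadd1 _ (ih x hx) _ hd₂
        convert this using 1
        ring
  have hsplit := Finset.card_filter_add_card_filter_not
    (s := (antidiagonal n).filter pred) (p := Q)
  have hA : (((antidiagonal n).filter pred).filter Q).card
      = if m ≤ n then ((antidiagonal (n - m)).filter pred).card else 0 := by
    by_cases hmn : m ≤ n
    · rw [if_pos hmn]
      have himg : ((antidiagonal n).filter pred).filter Q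
          = ((antidiagonal (n - m)).filter pred).image (fun p => (p.1 + m, p.2)) := by
        ext p
        simp only [Finset.mem_filter, Finset.mem_image, Finset.HasAntidiagonal.mem_antidiagonal, hpredd, hQQ]
        constructor
        · rintro ⟨⟨hpn, ⟨x, hx, hpx⟩, ⟨y, hy, hpy⟩⟩, ⟨x', hx', hpx'⟩⟩
          refine ⟨(d₁ * x', p.2), ⟨?_, ⟨x', hx', rfl⟩, ⟨y, hy, hpy⟩⟩, ?_⟩
          · set a := d₁ * x' with ha
            omega
          · set a := d₁ * x' with ha
            have hp : p = (a + m, p.2) := by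
              apply Prod.ext <;> simp [hpx']
            exact hp.symm
        · rintro ⟨q, ⟨hqn, ⟨x, hx, hqx⟩, ⟨y, hy, hqy⟩⟩, rfl⟩
          refine ⟨⟨?_, ⟨x + d₂, hadd1 _ hx _ hd₂, ?_⟩, ⟨y, hy, hqy⟩⟩, ⟨x, hx, by simp only; rw [hqx]⟩⟩
          · simp only
            omega
          · simp only
            rw [hqx, hm, mul_add]
      rw [himg]
      apply Finset.card_image_of_injective
      intro p q h
      simp only [Prod.mk.injEq] at h
      exact Prod.ext (by omega) h.2
    · rw [if_neg hmn]
      rw [Finset.card_eq_zero, Finset.eq_empty_iff_forall_notMem]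
      rintro p hp
      simp only [Finset.mem_filter, Finset.HasAntidiagonal.mem_antidiagonal, hQQ] at hp
      obtain ⟨⟨hpn, -⟩, x', hx', hpx'⟩ := hp
      have : m ≤ p.1 := by rw [hpx']; exact Nat.le_add_left m (d₁ * x')
      omega
  have hB : (((antidiagonal n).filter pred).filter (fun p => ¬ Q p)).card
      = if ∃ x ∈ S₁, ∃ y ∈ S₂, n = d₁ * x + d₂ * y then 1 else 0 := by
    by_cases hex : ∃ x ∈ S₁, ∃ y ∈ S₂, n = d₁ * x + d₂ * y
    · rw [if_pos hex]
      have hPex : ∃ x, x ∈ S₁ ∧ ∃ y ∈ S₂, n = d₁ * x + d₂ * y := by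
        obtain ⟨x, hx, y, hy, h⟩ := hex; exact ⟨x, hx, y, hy, h⟩
      obtain ⟨hx₀, y₀, hy₀, hn₀⟩ := Nat.find_spec hPex
      set x₀ := Nat.find hPex with hx₀def
      have hmin : ∀ x < x₀, ¬ (x ∈ S₁ ∧ ∃ y ∈ S₂, n = d₁ * x + d₂ * y) :=
        fun x hx => Nat.find_min hPex hx
      rw [Finset.card_eq_one]
      refine ⟨(d₁ * x₀, d₂ * y₀), ?_⟩
      rw [Finset.eq_singleton_iff_unique_mem]
      constructor
      · simp only [Finset.mem_filter, Finset.HasAntidiagonal.mem_antidiagonal, hpredd, hQQ]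
        refine ⟨⟨hn₀.symm, ⟨x₀, hx₀, rfl⟩, ⟨y₀, hy₀, rfl⟩⟩, ?_⟩
        rintro ⟨x', hx', hx'eq⟩
        have hx0eq : x₀ = x' + d₂ := by
          have h3 : d₁ * x₀ = d₁ * (x' + d₂) := by
            rw [hx'eq, hm, mul_add]
          exact Nat.eq_of_mul_eq_mul_left h1 h3
        refine hmin x' (by omega) ⟨hx', y₀ + d₁, hadd2 _ hy₀ _ hd₁, ?_⟩
        rw [hn₀, hx0eq]; ring
      · rintro p hp
        simp only [Finset.mem_filter, Finset.HasAntidiagonal.mem_antidiagonal, hpredd, hQQ] at hp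
        obtain ⟨⟨hpn, ⟨x, hx, hpx⟩, ⟨y, hy, hpy⟩⟩, hnQ⟩ := hp
        have hxy : n = d₁ * x + d₂ * y := by rw [← hpn, hpx, hpy]
        have hx₀le : x₀ ≤ x := Nat.find_le ⟨hx, y, hy, hxy⟩
        rcases eq_or_lt_of_le hx₀le with heq | hlt
        · have h5 : d₁ * x₀ + d₂ * y₀ = d₁ * x₀ + d₂ * y := by
            rw [← hn₀, hxy, ← heq]
          have h6 : y₀ = y := Nat.eq_of_mul_eq_mul_left h2 (Nat.add_left_cancel h5)
          apply Prod.ext <;> simp [hpx, hpy, ← heq, h6]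
        · exfalso
          obtain ⟨u, hxu, hupos⟩ : ∃ u, x = x₀ + u ∧ 0 < u := ⟨x - x₀, by omega, by omega⟩
          have he : d₁ * x₀ + d₂ * y₀ = d₁ * x₀ + d₁ * u + d₂ * y := by
            rw [← mul_add, ← hxu, ← hn₀]; exact hxy
          have hyle : y ≤ y₀ := by
            by_contra hc
            push_neg at hc
            have h7 : d₂ * y₀ < d₂ * y := by
              exact mul_lt_mul_of_pos_left hc h2
            have h8 : 0 ≤ d₁ * u := Nat.zero_le _
            linarith
          obtain ⟨v, hyv⟩ : ∃ v, y₀ = y + v := ⟨y₀ - y, by omega⟩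
          have huv : d₁ * u = d₂ * v := by
            rw [hyv, mul_add] at he
            linarith
          have hdvd : d₂ ∣ u := by
            have : d₂ ∣ d₁ * u := ⟨v, huv⟩
            exact (Nat.Coprime.dvd_of_dvd_mul_left hcop.symm this)
          obtain ⟨k, hk⟩ := hdvd
          obtain ⟨k', rfl⟩ : ∃ k', k = k' + 1 := by
            refine ⟨k - 1, ?_⟩
            rcases Nat.eq_zero_or_pos k with h | h
            · subst h; simp at hk; omega
            · omega
          apply hnQ
          refine ⟨x₀ + d₂ * k', hstep k' x₀ hx₀, ?_⟩
          rw [hpx, hxu, hk, hm]; ring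
    · rw [if_neg hex]
      rw [Finset.card_eq_zero, Finset.eq_empty_iff_forall_notMem]
      rintro p hp
      simp only [Finset.mem_filter, Finset.HasAntidiagonal.mem_antidiagonal, hpredd] at hp
      obtain ⟨⟨hpn, ⟨x, hx, hpx⟩, ⟨y, hy, hpy⟩⟩, -⟩ := hp
      exact hex ⟨x, hx, y, hy, by rw [← hpn, hpx, hpy]⟩
  rw [← hsplit, hA, hB]

open Classical in
/-- The generating series of the gluing `S = d₁S₁ + d₂S₂` of two numerical
semigroups satisfies `P_S(t) = (1 - t^{d₁d₂}) · P_{S₁}(t^{d₁}) · P_{S₂}(t^{d₂})`. -/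
theorem generating_series_gluing (S₁ S₂ : Set ℕ)
    (h01 : 0 ∈ S₁) (hadd1 : ∀ a ∈ S₁, ∀ b ∈ S₁, a + b ∈ S₁)
    (hfin1 : {n : ℕ | n ∉ S₁}.Finite)
    (h02 : 0 ∈ S₂) (hadd2 : ∀ a ∈ S₂, ∀ b ∈ S₂, a + b ∈ S₂)
    (hfin2 : {n : ℕ | n ∉ S₂}.Finite)
    (d₁ d₂ : ℕ) (hd₁ : d₁ ∈ S₂) (hd₂ : d₂ ∈ S₁)
    (h2a : 2 ≤ d₁) (h2b : 2 ≤ d₂) (hcop : Nat.Coprime d₁ d₂) :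
    (PowerSeries.mk fun n : ℕ =>
        if ∃ x ∈ S₁, ∃ y ∈ S₂, n = d₁ * x + d₂ * y then (1 : ℤ) else 0) =
      (1 - (PowerSeries.X : PowerSeries ℤ) ^ (d₁ * d₂)) *
        (PowerSeries.mk fun n : ℕ => if ∃ x ∈ S₁, n = d₁ * x then (1 : ℤ) else 0) *
        (PowerSeries.mk fun n : ℕ => if ∃ y ∈ S₂, n = d₂ * y then (1 : ℤ) else 0) := by
  classical
  have h1 : 0 < d₁ := by omega
  have h2 : 0 < d₂ := by omega
  ext n
  rw [mul_assoc, sub_mul, one_mul, map_sub, PowerSeries.coeff_mk,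
      PowerSeries.coeff_X_pow_mul', PowerSeries.coeff_mul, PowerSeries.coeff_mul]
  simp only [PowerSeries.coeff_mk]
  have key : ∀ k : ℕ, (∑ p ∈ antidiagonal k,
      (if ∃ x ∈ S₁, p.1 = d₁ * x then (1 : ℤ) else 0) *
        (if ∃ y ∈ S₂, p.2 = d₂ * y then (1 : ℤ) else 0))
      = (((antidiagonal k).filter
          (fun p => (∃ x ∈ S₁, p.1 = d₁ * x) ∧ ∃ y ∈ S₂, p.2 = d₂ * y)).card : ℤ) := by
    intro k
    rw [← Finset.sum_boole]
    apply Finset.sum_congr rfl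
    intro p _
    by_cases hP : ∃ x ∈ S₁, p.1 = d₁ * x <;>
      by_cases hQ : ∃ y ∈ S₂, p.2 = d₂ * y <;> simp [hP, hQ]
  rw [key, key]
  have hcount := gluing_count S₁ S₂ hadd1 hadd2 d₁ d₂ hd₁ hd₂ h1 h2 hcop n
  rw [hcount]
  split_ifs <;> push_cast <;> ring
end

section
/- Let S be a free numerical semigroup with generators a₁,…,a_g and n_i = gcd(a₁,…,a_{i-1})/gcd(a₁,…,a_i) for i ≥ 2, so that n_i·a_i ∈ ⟨a₁,…,a_{i-1}⟩ for all i. Then every element s ∈ S has a unique representation s = λ₁a₁ + ∑_{i=2}^g λ_i a_i with 0 ≤ λ_i < n_i for i ≥ 2 and λ₁ ∈ ℕ. -/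
lemma mem_closure_range_iff_nat {g : ℕ} (a : Fin g → ℕ) (s : ℕ) :
    s ∈ AddSubmonoid.closure (Set.range a) ↔ ∃ c : Fin g → ℕ, s = ∑ i, c i * a i := by
  constructor
  · intro hs
    induction hs using AddSubmonoid.closure_induction with
    | mem x hx =>
      obtain ⟨i, rfl⟩ := hx
      exact ⟨fun j => if j = i then 1 else 0, by simp [Finset.sum_ite_eq']⟩
    | zero => exact ⟨0, by simp⟩
    | add x y _ _ hx hy =>
      obtain ⟨c, rfl⟩ := hx; obtain ⟨c', rfl⟩ := hy
      exact ⟨c + c', by simp [add_mul, Finset.sum_add_distrib]⟩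
  · rintro ⟨c, rfl⟩
    exact AddSubmonoid.sum_mem _ fun i _ => by
      exact
        AddSubmonoid.nsmul_mem _ (AddSubmonoid.subset_closure (Set.mem_range_self i)) (c i)

lemma image_castSucc_Iio {g : ℕ} (i : Fin g) :
    (Finset.Iio i).image Fin.castSucc = Finset.Iio i.castSucc := by
  ext j
  simp only [Finset.mem_image, Finset.mem_Iio]
  constructor
  · rintro ⟨k, hk, rfl⟩; simpa using hk
  · intro hj
    have hj' : (j : ℕ) < g := lt_of_lt_of_le (by simpa [Fin.lt_def] using hj) (Nat.le_of_lt_succ i.castSucc.isLt |>.trans (le_refl _))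
    exact ⟨⟨j, by omega⟩, by simpa [Fin.lt_def] using hj, by simp [Fin.castSucc, Fin.ext_iff]⟩

lemma image_castSucc_Iic {g : ℕ} (i : Fin g) :
    (Finset.Iic i).image Fin.castSucc = Finset.Iic i.castSucc := by
  ext j
  simp only [Finset.mem_image, Finset.mem_Iic]
  constructor
  · rintro ⟨k, hk, rfl⟩; simpa using hk
  · intro hj
    have : (j : ℕ) ≤ (i : ℕ) := by simpa [Fin.le_def] using hj
    exact ⟨⟨j, by omega⟩, by simpa [Fin.le_def] using hj, by simp [Fin.castSucc, Fin.ext_iff]⟩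

lemma setimage_castSucc_lt {g : ℕ} (i : Fin g) :
    Fin.castSucc '' {j : Fin g | j < i} = {j : Fin (g+1) | j < i.castSucc} := by
  ext j
  simp only [Set.mem_image, Set.mem_setOf_eq]
  constructor
  · rintro ⟨k, hk, rfl⟩; simpa using hk
  · intro hj
    exact ⟨⟨j, by have := i.isLt; have := (Fin.lt_def.mp hj); simp at this ⊢; omega⟩,
      by simpa [Fin.lt_def] using hj, by simp [Fin.castSucc, Fin.ext_iff]⟩

lemma setOf_lt_last {g : ℕ} :
    {j : Fin (g+1) | j < Fin.last g} = Set.range (Fin.castSucc : Fin g → Fin (g+1)) := by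
  ext j
  simp only [Set.mem_setOf_eq, Set.mem_range]
  constructor
  · intro hj
    exact ⟨⟨j, by simpa [Fin.lt_def] using hj⟩, by simp [Fin.castSucc, Fin.ext_iff]⟩
  · rintro ⟨k, rfl⟩; exact Fin.castSucc_lt_last k

lemma gcd_Iio_castSucc {g : ℕ} (a : Fin (g+1) → ℕ) (i : Fin g) :
    (Finset.Iio i.castSucc).gcd a = (Finset.Iio i).gcd (a ∘ Fin.castSucc) := by
  rw [← image_castSucc_Iio, Finset.gcd_image]

lemma gcd_Iic_castSucc {g : ℕ} (a : Fin (g+1) → ℕ) (i : Fin g) :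
    (Finset.Iic i.castSucc).gcd a = (Finset.Iic i).gcd (a ∘ Fin.castSucc) := by
  rw [← image_castSucc_Iic, Finset.gcd_image]

lemma rep_unique : ∀ (g : ℕ) (a n : Fin g → ℕ), (∀ i, 0 < a i) →
    (∀ i : Fin g, 0 < (i : ℕ) →
      (Finset.Iio i).gcd a = n i * (Finset.Iic i).gcd a) →
    ∀ lam mu : Fin g → ℕ,
      (∀ i : Fin g, 0 < (i : ℕ) → lam i < n i) →
      (∀ i : Fin g, 0 < (i : ℕ) → mu i < n i) →
      (∑ i, lam i * a i) = (∑ i, mu i * a i) → lam = mu := by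
  intro g
  induction g with
  | zero => intro a n _ _ lam mu _ _ _; funext i; exact i.elim0
  | succ g ih =>
    intro a n hpos hn lam mu hlam hmu hsum
    set L := Fin.last g with hL
    -- equality of last coordinates
    have key : lam L = mu L := by
      rcases Nat.eq_zero_or_pos g with hg0 | hg0
      · subst hg0
        have h0 : L = 0 := rfl
        rw [Fin.sum_univ_one, Fin.sum_univ_one] at hsum
        have := Nat.eq_of_mul_eq_mul_right (hpos 0) hsum
        rw [h0]; exact this
      · have hLpos : 0 < (L : ℕ) := hg0
        set d' : ℕ := (Finset.Iic L).gcd a with hd'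
        set d : ℕ := (Finset.Iio L).gcd a with hd
        have hnd : d = n L * d' := hn L hLpos
        have hd'a : d' ∣ a L := Finset.gcd_dvd (Finset.mem_Iic.mpr le_rfl)
        have hd'pos : 0 < d' := by
          rcases Nat.eq_zero_or_pos d' with h | h
          · have h0 := (Finset.gcd_eq_zero_iff.mp (hd' ▸ h)) L (Finset.mem_Iic.mpr le_rfl)
            have := hpos L; omega
          · exact h
        have hdpos : 0 < d := by
          rcases Nat.eq_zero_or_pos d with h | h
          · exfalso
            have h0L : (0 : Fin (g+1)) < L := by
              simp [Fin.lt_def, hL]; omega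
            have h00 := (Finset.gcd_eq_zero_iff.mp (hd ▸ h)) 0 (Finset.mem_Iio.mpr h0L)
            have := hpos 0; omega
          · exact h
        have hnpos : 0 < n L := by
          rcases Nat.eq_zero_or_pos (n L) with h | h
          · rw [h, zero_mul] at hnd; omega
          · exact h
        obtain ⟨b, hb⟩ := hd'a
        -- coprimality of n L and b
        have hcop : Nat.Coprime (n L) b := by
          have hins : Finset.Iic L = insert L (Finset.Iio L) := by
            rw [Finset.Iio_insert]
          have : d' = GCDMonoid.gcd (a L) d := by
            rw [hd', hins, Finset.gcd_insert, ← hd]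
          have h2 : d' = Nat.gcd (d' * b) (n L * d') := by
            rw [← hb, ← hnd]; exact this
          have h3 : d' = d' * Nat.gcd b (n L) := by
            conv_lhs => rw [h2]
            rw [mul_comm (n L) d', Nat.gcd_mul_left]
          have h4 : d' * 1 = d' * Nat.gcd b (n L) := by rw [mul_one]; exact h3
          exact Nat.coprime_comm.mp (Nat.eq_of_mul_eq_mul_left hd'pos h4).symm
        -- divisibility of the difference
        have hdvd : (d : ℤ) ∣ ((lam L : ℤ) - mu L) * a L := by
          have hsplit : ∀ f : Fin (g+1) → ℕ,
              (∑ i, f i * a i) = (∑ i : Fin g, f i.castSucc * a i.castSucc) + f L * a L :=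
            fun f => Fin.sum_univ_castSucc (fun i => f i * a i)
          have hdL : ∀ j : Fin g, (d : ℤ) ∣ (a j.castSucc : ℤ) := fun j => by
            exact_mod_cast Int.natCast_dvd_natCast.mpr
              (Finset.gcd_dvd (Finset.mem_Iio.mpr (Fin.castSucc_lt_last j)))
          have h1 : (d : ℤ) ∣ ∑ i : Fin g, (lam i.castSucc : ℤ) * a i.castSucc :=
            Finset.dvd_sum fun i _ => Dvd.dvd.mul_left (hdL i) _
          have h2 : (d : ℤ) ∣ ∑ i : Fin g, (mu i.castSucc : ℤ) * a i.castSucc :=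
            Finset.dvd_sum fun i _ => Dvd.dvd.mul_left (hdL i) _
          have hz : ((lam L : ℤ) - mu L) * a L =
              (∑ i : Fin g, (mu i.castSucc : ℤ) * a i.castSucc)
              - ∑ i : Fin g, (lam i.castSucc : ℤ) * a i.castSucc := by
            have := hsum
            rw [hsplit lam, hsplit mu] at this
            have := congrArg (Nat.cast : ℕ → ℤ) this
            push_cast at this
            linarith
          rw [hz]; exact dvd_sub h2 h1
        -- cancel d' and use coprimality
        have hdvd2 : (n L : ℤ) ∣ ((lam L : ℤ) - mu L) := by
          have : ((n L : ℤ) * d') ∣ (((lam L : ℤ) - mu L) * b) * d' := by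
            have := hdvd
            rw [hnd, hb] at this
            push_cast at this ⊢
            convert this using 1
            ring
          have hnb : (n L : ℤ) ∣ ((lam L : ℤ) - mu L) * b :=
            (mul_dvd_mul_iff_right (by exact_mod_cast hd'pos.ne' : (d' : ℤ) ≠ 0)).mp this
          have hcz : IsCoprime (n L : ℤ) (b : ℤ) := by
            rw [Int.isCoprime_iff_gcd_eq_one]
            exact_mod_cast hcop
          exact hcz.dvd_of_dvd_mul_right hnb
        have habs : |((lam L : ℤ) - mu L)| < n L := by
          have h1 := hlam L hLpos
          have h2 := hmu L hLpos
          rw [abs_lt]; push_cast; omega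
        have := Int.eq_zero_of_abs_lt_dvd hdvd2 habs
        omega
    -- restricted sums are equal
    have hrest : (∑ i : Fin g, lam i.castSucc * a i.castSucc)
        = ∑ i : Fin g, mu i.castSucc * a i.castSucc := by
      have h1 := hsum
      rw [Fin.sum_univ_castSucc (fun i => lam i * a i),
        Fin.sum_univ_castSucc (fun i => mu i * a i), key] at h1
      simp only [← hL] at h1
      omega
    have hrec := ih (a ∘ Fin.castSucc) (n ∘ Fin.castSucc) (fun i => hpos _)
      (fun i hi => by
        have := hn i.castSucc (by simpa using hi)
        rwa [gcd_Iio_castSucc, gcd_Iic_castSucc] at this)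
      (lam ∘ Fin.castSucc) (mu ∘ Fin.castSucc)
      (fun i hi => hlam i.castSucc (by simpa using hi))
      (fun i hi => hmu i.castSucc (by simpa using hi))
      hrest
    funext i
    induction i using Fin.lastCases with
    | last => exact key
    | cast j => exact congrFun hrec j
lemma rep_exists : ∀ (g : ℕ) (a n : Fin g → ℕ), (∀ i, 0 < a i) →
    (∀ i : Fin g, 0 < (i : ℕ) →
      (Finset.Iio i).gcd a = n i * (Finset.Iic i).gcd a) →
    (∀ i : Fin g, 0 < (i : ℕ) →
      n i * a i ∈ AddSubmonoid.closure (a '' {j : Fin g | j < i})) →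
    ∀ c : Fin g → ℕ, ∃ lam : Fin g → ℕ,
      (∀ i : Fin g, 0 < (i : ℕ) → lam i < n i) ∧
      (∑ i, c i * a i) = ∑ i, lam i * a i := by
  intro g
  induction g with
  | zero => intro a n _ _ _ c; exact ⟨c, fun i => i.elim0, rfl⟩
  | succ g ih =>
    intro a n hpos hn hfree c
    rcases Nat.eq_zero_or_pos g with hg0 | hg0
    · refine ⟨c, fun i hi => absurd hi ?_, rfl⟩
      have := i.isLt
      omega
    · set L := Fin.last g with hL
      have hLpos : 0 < (L : ℕ) := hg0
      -- n L > 0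
      have hnpos : 0 < n L := by
        have hnd := hn L hLpos
        have hdpos : 0 < (Finset.Iio L).gcd a := by
          rcases Nat.eq_zero_or_pos ((Finset.Iio L).gcd a) with h | h
          · have h0L : (0 : Fin (g+1)) < L := by simp [Fin.lt_def, hL]; omega
            have h00 := (Finset.gcd_eq_zero_iff.mp h) 0 (Finset.mem_Iio.mpr h0L)
            have := hpos 0; omega
          · exact h
        rcases Nat.eq_zero_or_pos (n L) with h | h
        · rw [h, zero_mul] at hnd; omega
        · exact h
      set q := c L / n L with hq
      set r := c L % n L with hr
      -- the part below the top generator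
      have hmem : (q * (n L * a L) + ∑ i : Fin g, c i.castSucc * a i.castSucc)
          ∈ AddSubmonoid.closure (Set.range (a ∘ Fin.castSucc)) := by
        have hset : a '' {j : Fin (g+1) | j < L} = Set.range (a ∘ Fin.castSucc) := by
          rw [hL, setOf_lt_last, ← Set.range_comp]
        refine AddSubmonoid.add_mem _ ?_ ?_
        · have h1 := hfree L hLpos
          rw [hset] at h1
          simpa [nsmul_eq_mul] using AddSubmonoid.nsmul_mem _ h1 q
        · refine AddSubmonoid.sum_mem _ fun i _ => ?_
          have : a i.castSucc ∈ AddSubmonoid.closure (Set.range (a ∘ Fin.castSucc)) :=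
            AddSubmonoid.subset_closure (Set.mem_range_self i)
          simpa [nsmul_eq_mul] using AddSubmonoid.nsmul_mem _ this (c i.castSucc)
      obtain ⟨c', hc'⟩ := (mem_closure_range_iff_nat (a ∘ Fin.castSucc) _).mp hmem
      obtain ⟨lam', hlam', hsum'⟩ := ih (a ∘ Fin.castSucc) (n ∘ Fin.castSucc)
        (fun i => hpos _)
        (fun i hi => by
          have := hn i.castSucc (by simpa using hi)
          rwa [gcd_Iio_castSucc, gcd_Iic_castSucc] at this)
        (fun i hi => by
          have h1 := hfree i.castSucc (by simpa using hi)
          rwa [show a '' {j : Fin (g+1) | j < i.castSucc}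
              = (a ∘ Fin.castSucc) '' {j : Fin g | j < i} by
            rw [← setimage_castSucc_lt, ← Set.image_comp]] at h1)
        c'
      refine ⟨Fin.snoc lam' r, ?_, ?_⟩
      · intro i hi
        induction i using Fin.lastCases with
        | last =>
          rw [Fin.snoc_last]
          exact Nat.mod_lt _ hnpos
        | cast j =>
          rw [Fin.snoc_castSucc]
          exact hlam' j (by simpa using hi)
      · rw [Fin.sum_univ_castSucc (fun i => c i * a i),
          Fin.sum_univ_castSucc]
        simp only [Fin.snoc_castSucc, Fin.snoc_last, ← hL]
        have hmod : n L * q + r = c L := by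
          rw [hq, hr]; exact Nat.div_add_mod (c L) (n L)
        calc (∑ i : Fin g, c i.castSucc * a i.castSucc) + c L * a L
            = (q * (n L * a L) + ∑ i : Fin g, c i.castSucc * a i.castSucc) + r * a L := by
              rw [← hmod]; ring
          _ = (∑ i : Fin g, lam' i * (a ∘ Fin.castSucc) i) + r * a L := by rw [← hsum', ← hc']
          _ = (∑ i : Fin g, lam' i * a i.castSucc) + r * a L := rfl
          _ = (∑ i : Fin g, lam' i * a i.castSucc) + (Fin.snoc lam' r : Fin (g+1) → ℕ) L * a L := by
              simp [hL]

/-- Every element of a free numerical semigroup `S = ⟨a₁,…,a_g⟩` (with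
`nᵢ = gcd(a₁,…,a_{i-1})/gcd(a₁,…,aᵢ)` and `nᵢ·aᵢ ∈ ⟨a₁,…,a_{i-1}⟩`) has a
unique representation `s = λ₁a₁ + ∑_{i≥2} λᵢaᵢ` with `0 ≤ λᵢ < nᵢ` for
`i ≥ 2`. -/
theorem free_semigroup_unique_representation (g : ℕ) (hg : 0 < g)
    (a : Fin g → ℕ) (hpos : ∀ i, 0 < a i)
    (hgcd : Finset.univ.gcd a = 1)
    (n : Fin g → ℕ)
    (hn : ∀ i : Fin g, 0 < (i : ℕ) →
      (Finset.Iio i).gcd a = n i * (Finset.Iic i).gcd a)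
    (hfree : ∀ i : Fin g, 0 < (i : ℕ) →
      n i * a i ∈ AddSubmonoid.closure (a '' {j : Fin g | j < i})) :
    ∀ s ∈ AddSubmonoid.closure (Set.range a),
      ∃! lam : Fin g → ℕ,
        (∀ i : Fin g, 0 < (i : ℕ) → lam i < n i) ∧
        s = ∑ i, lam i * a i := by
  intro s hs
  obtain ⟨c, rfl⟩ := (mem_closure_range_iff_nat a _).mp hs
  obtain ⟨lam, hlt, hsum⟩ := rep_exists g a n hpos hn hfree c
  refine ⟨lam, ⟨hlt, hsum⟩, ?_⟩
  rintro mu ⟨hmu, hmusum⟩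
  exact rep_unique g a n hpos hn mu lam hmu hlt (by omega)
end

section
/- Let S be a free numerical semigroup with generators a₁,…,a_g and n_i = gcd(a₁,…,a_{i-1})/gcd(a₁,…,a_i). Then the conductor of S is c(S) = ∑_{i=2}^g (n_i - 1)·a_i - a₁ + 1. -/
open Finset

private lemma gcdMapAux {β : Type*} (s : Finset β) (f : β ↪ ℕ) (h : ℕ → ℕ) :
    (s.map f).gcd h = s.gcd (h ∘ f) := by
  simp [Finset.gcd_def, Finset.map_val, Multiset.map_map]

private lemma closureImageRep {g : ℕ} (a : Fin g → ℕ) (s : Set (Fin g)) (x : ℕ)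
    (hx : x ∈ AddSubmonoid.closure (a '' s)) :
    ∃ c : Fin g → ℕ, (∀ j, j ∉ s → c j = 0) ∧ x = ∑ j, c j * a j := by
  classical
  induction hx using AddSubmonoid.closure_induction with
  | mem y hy =>
      obtain ⟨j, hj, rfl⟩ := hy
      refine ⟨fun t => if t = j then 1 else 0, ?_, ?_⟩
      · intro t ht
        simp only [ite_eq_right_iff]
        rintro rfl; exact absurd hj ht
      · rw [Finset.sum_eq_single j] <;> simp +contextual
  | zero => exact ⟨0, by simp, by simp⟩
  | add x y hx hy ihx ihy =>
      obtain ⟨c1, hc1, rfl⟩ := ihx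
      obtain ⟨c2, hc2, rfl⟩ := ihy
      exact ⟨c1 + c2, fun j hj => by simp [hc1 j hj, hc2 j hj],
        by simp [add_mul, Finset.sum_add_distrib]⟩

private lemma conductorAux : ∀ g : ℕ, 1 ≤ g → ∀ a n : ℕ → ℕ,
    (∀ i, i < g → 0 < a i) →
    (∀ i, 0 < i → i < g → (Finset.range i).gcd a = n i * (Finset.range (i+1)).gcd a) →
    (∀ i, 0 < i → i < g → ∃ ν : ℕ → ℕ,
      ((n i : ℤ) * a i) = ∑ j ∈ Finset.range i, (ν j : ℤ) * a j) →
    (∀ m : ℤ, (((Finset.range g).gcd a : ℕ) : ℤ) ∣ m →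
        (∑ i ∈ Finset.Ico 1 g, ((n i : ℤ) - 1) * a i) - a 0 < m →
        ∃ μ : ℕ → ℕ, m = ∑ j ∈ Finset.range g, (μ j : ℤ) * a j) ∧
    ¬ (∃ μ : ℕ → ℕ, ((∑ i ∈ Finset.Ico 1 g, ((n i : ℤ) - 1) * a i) - (a 0 : ℤ))
        = ∑ j ∈ Finset.range g, (μ j : ℤ) * a j) := by
  intro g
  induction g with
  | zero => omega
  | succ g IH =>
    intro _ a n hpos hn hfree
    rcases Nat.eq_zero_or_pos g with rfl | hg1
    · -- base case: one generator
      constructor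
      · intro m hdvd hlt
        have ha0 : (0:ℤ) < a 0 := by exact_mod_cast hpos 0 (by omega)
        have hdvd' : (a 0 : ℤ) ∣ m := by
          have h1 : (Finset.range (0+1)).gcd a = a 0 := by
            simp [Finset.range_one]
          rwa [h1] at hdvd
        have hlt' : -(a 0 : ℤ) < m := by simpa using hlt
        obtain ⟨k, rfl⟩ := hdvd'
        have hk0 : 0 ≤ k := by nlinarith
        refine ⟨fun _ => k.toNat, ?_⟩
        rw [show (0+1 : ℕ) = 1 from rfl, Finset.range_one, Finset.sum_singleton,
          Int.toNat_of_nonneg hk0]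
        ring
      · rintro ⟨μ, hμ⟩
        have ha0 : (0:ℤ) < a 0 := by exact_mod_cast hpos 0 (by omega)
        have h1 : (0:ℤ) ≤ ∑ j ∈ Finset.range (0+1), (μ j : ℤ) * a j :=
          Finset.sum_nonneg fun j _ => by positivity
        simp only [Nat.zero_add, Finset.Ico_self, Finset.sum_empty, zero_sub] at hμ
        linarith [hμ ▸ h1]
      -- inductive step, g ≥ 1
    · obtain ⟨IH1, IH2⟩ := IH hg1 a n (fun i hi => hpos i (by omega))
        (fun i h1 h2 => hn i h1 (by omega)) (fun i h1 h2 => hfree i h1 (by omega))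
      set d := (Finset.range (g+1)).gcd a with hd
      set dg := (Finset.range g).gcd a with hdg
      have hdgn : dg = n g * d := hn g hg1 (Nat.lt_succ_self g)
      have hd0 : 0 < d := by
        rcases Nat.eq_zero_or_pos d with h | h
        · have := Finset.gcd_eq_zero_iff.mp h 0 (Finset.mem_range.mpr (by omega))
          exact absurd this (hpos 0 (by omega)).ne'
        · exact h
      have hdg0 : 0 < dg := by
        rcases Nat.eq_zero_or_pos dg with h | h
        · have := Finset.gcd_eq_zero_iff.mp h 0 (Finset.mem_range.mpr (by omega))
          exact absurd this (hpos 0 (by omega)).ne'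
        · exact h
      have hng0 : 0 < n g := by
        rcases Nat.eq_zero_or_pos (n g) with h | h
        · rw [h, zero_mul] at hdgn; omega
        · exact h
      have hdag : d ∣ a g := Finset.gcd_dvd (Finset.mem_range.mpr (Nat.lt_succ_self g))
      obtain ⟨b, hb⟩ := hdag
      have hgcdeq : Nat.gcd dg (a g) = d := by
        apply Nat.dvd_antisymm
        · apply Finset.dvd_gcd
          intro i hi
          rcases Nat.lt_succ_iff_lt_or_eq.mp (Finset.mem_range.mp hi) with h | rfl
          · exact (Nat.gcd_dvd_left _ _).trans (Finset.gcd_dvd (Finset.mem_range.mpr h))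
          · exact Nat.gcd_dvd_right _ _
        · exact Nat.dvd_gcd
            (Finset.dvd_gcd fun i hi => Finset.gcd_dvd
              (Finset.mem_range.mpr (by have := Finset.mem_range.mp hi; omega)))
            ⟨b, hb⟩
      have hcop : Nat.Coprime (n g) b := by
        have h7 : Nat.gcd (n g * d) (b * d) = Nat.gcd (n g) b * d := Nat.gcd_mul_right _ _ _
        rw [← hdgn, mul_comm b d, ← hb, hgcdeq] at h7
        exact Nat.eq_of_mul_eq_mul_right hd0 (by rw [← h7, one_mul])
      have hcopZ : IsCoprime (b : ℤ) (n g : ℤ) := Nat.isCoprime_iff_coprime.mpr hcop.symm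
      set Fg : ℤ := (∑ i ∈ Finset.Ico 1 g, ((n i : ℤ) - 1) * a i) - a 0 with hFg
      have hFsplit : (∑ i ∈ Finset.Ico 1 (g+1), ((n i : ℤ) - 1) * a i) - (a 0 : ℤ)
          = Fg + ((n g : ℤ) - 1) * a g := by
        rw [Finset.sum_Ico_succ_top (by omega)]; ring
      constructor
      · -- every big multiple of d is representable
        intro m hdvd hlt
        rw [hFsplit] at hlt
        obtain ⟨m', hm'⟩ := hdvd
        obtain ⟨u, v, huv⟩ := hcopZ
        set lam : ℤ := (m' * u) % (n g) with hlam
        have hng0' : (0:ℤ) < n g := by exact_mod_cast hng0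
        have hlam0 : 0 ≤ lam := Int.emod_nonneg _ (by omega)
        have hlam1 : lam < n g := Int.emod_lt_of_pos _ hng0'
        have hkey : (n g : ℤ) ∣ m' - lam * b := by
          have h2 : (n g : ℤ) ∣ m' * u - lam :=
            ⟨m' * u / n g, by rw [hlam, Int.emod_def]; ring⟩
          have h3 : m' - lam * b = (m' * u - lam) * b + (m' * v) * (n g) := by
            linear_combination -m' * huv
          rw [h3]
          exact dvd_add (h2.mul_right b) (Dvd.intro_left _ rfl)
        obtain ⟨t, ht⟩ := hkey
        have hdvd2 : ((dg : ℕ) : ℤ) ∣ m - lam * a g := by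
          refine ⟨t, ?_⟩
          rw [hm', hb, hdgn]
          push_cast
          linear_combination (d : ℤ) * ht
        have hlt2 : Fg < m - lam * a g := by
          have hag0 : (0:ℤ) ≤ a g := by positivity
          nlinarith
        obtain ⟨μ', hμ'⟩ := IH1 (m - lam * a g) hdvd2 hlt2
        classical
        refine ⟨fun j => if j = g then lam.toNat else μ' j, ?_⟩
        rw [Finset.sum_range_succ]
        beta_reduce
        have hcongr : ∑ j ∈ Finset.range g,
            (((if j = g then lam.toNat else μ' j : ℕ)) : ℤ) * a j
            = ∑ j ∈ Finset.range g, (μ' j : ℤ) * a j := by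
          refine Finset.sum_congr rfl fun j hj => ?_
          rw [if_neg (by have := Finset.mem_range.mp hj; omega)]
        rw [hcongr, ← hμ', if_pos rfl, Int.toNat_of_nonneg hlam0]
        ring
      · -- the Frobenius number is not representable
        rintro ⟨μ, hμ⟩
        rw [hFsplit, Finset.sum_range_succ] at hμ
        set S : ℤ := ∑ j ∈ Finset.range g, (μ j : ℤ) * a j with hS
        have hdvdFg : ((dg : ℕ) : ℤ) ∣ Fg := by
          apply dvd_sub
          · apply Finset.dvd_sum
            intro i hi
            have h1 : dg ∣ a i := Finset.gcd_dvd
              (Finset.mem_range.mpr (Finset.mem_Ico.mp hi).2)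
            exact Dvd.dvd.mul_left (Int.natCast_dvd_natCast.mpr h1) _
          · exact_mod_cast Finset.gcd_dvd (Finset.mem_range.mpr (by omega))
        have hdvdS : ((dg : ℕ) : ℤ) ∣ S := by
          apply Finset.dvd_sum
          intro j hj
          exact Dvd.dvd.mul_left
            (Int.natCast_dvd_natCast.mpr (Finset.gcd_dvd hj)) _
        have h3 : ((dg : ℕ) : ℤ) ∣ ((μ g : ℤ) - ((n g : ℤ) - 1)) * a g := by
          have heq : ((μ g : ℤ) - ((n g : ℤ) - 1)) * a g = Fg - S := by
            linear_combination -hμ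
          rw [heq]; exact dvd_sub hdvdFg hdvdS
        have h4 : (n g : ℤ) ∣ ((μ g : ℤ) - ((n g : ℤ) - 1)) := by
          have hd0' : (0:ℤ) < d := by exact_mod_cast hd0
          have h5 : (n g : ℤ) * d ∣ (((μ g : ℤ) - ((n g : ℤ) - 1)) * b) * d := by
            rw [hdgn] at h3
            push_cast at h3
            convert h3 using 1
            rw [hb]; push_cast; ring
          have h6 : (n g : ℤ) ∣ ((μ g : ℤ) - ((n g : ℤ) - 1)) * b :=
            (mul_dvd_mul_iff_right hd0'.ne').mp h5
          exact (hcopZ.symm).dvd_of_dvd_mul_right h6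
        obtain ⟨k, hk⟩ := h4
        have hng0' : (1:ℤ) ≤ n g := by exact_mod_cast hng0
        have hμg0 : (0:ℤ) ≤ μ g := by positivity
        have hk0 : 0 ≤ k := by
          by_contra hcon
          push_neg at hcon
          have hkle : k ≤ -1 := by omega
          nlinarith
        obtain ⟨ν, hν⟩ := hfree g hg1 (Nat.lt_succ_self g)
        apply IH2
        refine ⟨fun j => μ j + k.toNat * ν j, ?_⟩
        have hterm : ∀ j, (((μ j + k.toNat * ν j : ℕ)) : ℤ) * a j
            = (μ j : ℤ) * a j + k * ((ν j : ℤ) * a j) := by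
          intro j
          push_cast [Int.toNat_of_nonneg hk0]
          ring
        simp_rw [hterm]
        rw [Finset.sum_add_distrib, ← Finset.mul_sum, ← hν, ← hS]
        linear_combination hμ + a g * hk

/-- The conductor of a free numerical semigroup `S = ⟨a₁,…,a_g⟩` is
`c(S) = ∑_{i=2}^g (nᵢ - 1)·aᵢ - a₁ + 1`. -/
theorem free_semigroup_conductor (g : ℕ) (hg : 0 < g)
    (a : Fin g → ℕ) (hpos : ∀ i, 0 < a i)
    (hgcd : Finset.univ.gcd a = 1)
    (n : Fin g → ℕ)
    (hn : ∀ i : Fin g, 0 < (i : ℕ) →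
      (Finset.Iio i).gcd a = n i * (Finset.Iic i).gcd a)
    (hfree : ∀ i : Fin g, 0 < (i : ℕ) →
      n i * a i ∈ AddSubmonoid.closure (a '' {j : Fin g | j < i})) :
    (((sInf {c : ℕ | ∀ m ≥ c, m ∈ AddSubmonoid.closure (Set.range a)} : ℕ) : ℤ) =
      (∑ i ∈ Finset.univ.filter (fun i : Fin g => 0 < (i : ℕ)),
        ((n i : ℤ) - 1) * (a i : ℤ)) - (a ⟨0, hg⟩ : ℤ) + 1) := by
  classical
  set A : ℕ → ℕ := fun t => if h : t < g then a ⟨t, h⟩ else 1 with hA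
  set N : ℕ → ℕ := fun t => if h : t < g then n ⟨t, h⟩ else 1 with hN
  have hAval : ∀ (j : Fin g), A (j : ℕ) = a j := fun j => by simp [hA, j.isLt]
  have hNval : ∀ (j : Fin g), N (j : ℕ) = n j := fun j => by simp [hN, j.isLt]
  have hgcdmap : ∀ s : Finset (Fin g), (s.map Fin.valEmbedding).gcd A = s.gcd a := by
    intro s
    rw [gcdMapAux]
    exact Finset.gcd_congr rfl fun j _ => hAval j
  -- the ℕ-indexed sum over `range g` versus the `Fin`-indexed sum
  have hsum_univ : ∀ c : Fin g → ℕ,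
      ∑ j : Fin g, c j * a j
        = ∑ j ∈ Finset.range g, (if h : j < g then c ⟨j, h⟩ else 0) * A j := by
    intro c
    rw [← Fin.sum_univ_eq_sum_range (fun j => (if h : j < g then c ⟨j, h⟩ else 0) * A j) g]
    exact Finset.sum_congr rfl fun j _ => by simp [hAval j, j.isLt]
  -- hypotheses of conductorAux
  have hpos' : ∀ t, t < g → 0 < A t := by
    intro t ht; simp only [hA, dif_pos ht]; exact hpos _
  have hn' : ∀ t, 0 < t → t < g → (Finset.range t).gcd A
      = N t * (Finset.range (t+1)).gcd A := by
    intro t ht htg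
    have e1 : (Finset.Iio (⟨t, htg⟩ : Fin g)).map Fin.valEmbedding = Finset.range t := by
      rw [Fin.map_valEmbedding_Iio, Nat.Iio_eq_range]
    have e2 : (Finset.Iic (⟨t, htg⟩ : Fin g)).map Fin.valEmbedding
        = Finset.range (t+1) := by
      rw [Fin.map_valEmbedding_Iic]
      ext x; simp [Nat.lt_succ_iff]
    rw [← e1, ← e2, hgcdmap, hgcdmap]
    have := hNval ⟨t, htg⟩
    rw [show N t = n ⟨t, htg⟩ from this]
    exact hn ⟨t, htg⟩ ht
  have hfree' : ∀ t, 0 < t → t < g → ∃ ν : ℕ → ℕ,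
      ((N t : ℤ) * A t) = ∑ j ∈ Finset.range t, (ν j : ℤ) * A j := by
    intro t ht htg
    obtain ⟨c, hc0, hcsum⟩ := closureImageRep a {j | j < ⟨t, htg⟩} _ (hfree ⟨t, htg⟩ ht)
    refine ⟨fun s => if h : s < g then c ⟨s, h⟩ else 0, ?_⟩
    have key : n ⟨t, htg⟩ * a ⟨t, htg⟩
        = ∑ j ∈ Finset.range t, (if h : j < g then c ⟨j, h⟩ else 0) * A j := by
      rw [hcsum, hsum_univ c]
      symm
      apply Finset.sum_subset (Finset.range_subset_range.mpr (le_of_lt htg))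
      intro x hx hnx
      have hxg : x < g := Finset.mem_range.mp hx
      have hxt : ¬ x < t := fun h => hnx (Finset.mem_range.mpr h)
      rw [dif_pos hxg, hc0 ⟨x, hxg⟩ (fun hmem => hxt hmem), zero_mul]
    have h3 : N t * A t = n ⟨t, htg⟩ * a ⟨t, htg⟩ := by simp [hN, hA, htg]
    calc (N t : ℤ) * A t = ((N t * A t : ℕ) : ℤ) := by push_cast; ring
      _ = ((∑ j ∈ Finset.range t, (if h : j < g then c ⟨j, h⟩ else 0) * A j : ℕ) : ℤ) := by
          rw [h3, key]
      _ = ∑ j ∈ Finset.range t, ((if h : j < g then c ⟨j, h⟩ else 0 : ℕ) : ℤ) * (A j : ℤ) := by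
          push_cast; rfl
  obtain ⟨H1, H2⟩ := conductorAux g hg A N hpos' hn' hfree'
  have hgcd1 : (Finset.range g).gcd A = 1 := by
    have e3 : (Finset.univ : Finset (Fin g)).map Fin.valEmbedding = Finset.range g := by
      rw [Fin.map_valEmbedding_univ, Nat.Iio_eq_range]
    rw [← e3, hgcdmap, hgcd]
  rw [hgcd1] at H1
  -- characterization of membership in the semigroup
  have hchar : ∀ x : ℕ, x ∈ AddSubmonoid.closure (Set.range a) ↔
      ∃ μ : ℕ → ℕ, (x : ℤ) = ∑ j ∈ Finset.range g, (μ j : ℤ) * A j := by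
    intro x
    constructor
    · intro hx
      rw [← Set.image_univ] at hx
      obtain ⟨c, -, rfl⟩ := closureImageRep a Set.univ x hx
      refine ⟨fun s => if h : s < g then c ⟨s, h⟩ else 0, ?_⟩
      rw [hsum_univ c]
      push_cast
      rfl
    · rintro ⟨μ, hμ⟩
      have hx : x = ∑ j ∈ Finset.range g, μ j * A j := by exact_mod_cast hμ
      rw [hx]
      apply AddSubmonoid.sum_mem
      intro j hj
      have hjg : j < g := Finset.mem_range.mp hj
      have hAj : A j = a ⟨j, hjg⟩ := by simp [hA, hjg]
      rw [hAj, ← smul_eq_mul]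
      have hmem : a ⟨j, hjg⟩ ∈ AddSubmonoid.closure (Set.range a) :=
        AddSubmonoid.subset_closure ⟨⟨j, hjg⟩, rfl⟩
      exact nsmul_mem hmem (μ j)
  set F : ℤ := (∑ i ∈ Finset.Ico 1 g, ((N i : ℤ) - 1) * A i) - A 0 with hF
  have hFnonneg : 0 ≤ F + 1 := by
    obtain ⟨μ, hμ⟩ := H1 (F + 1) (one_dvd _) (lt_add_one F)
    rw [hμ]
    exact Finset.sum_nonneg fun j _ => by positivity
  set C : ℕ := (F + 1).toNat with hC
  have hCF : (C : ℤ) = F + 1 := Int.toNat_of_nonneg hFnonneg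
  have hCmem : C ∈ {c : ℕ | ∀ m ≥ c, m ∈ AddSubmonoid.closure (Set.range a)} := by
    intro m hm
    rw [hchar m]
    apply H1 (m : ℤ) (one_dvd _)
    have h4 : (C : ℤ) ≤ m := by exact_mod_cast hm
    omega
  have hge : ∀ c ∈ {c : ℕ | ∀ m ≥ c, m ∈ AddSubmonoid.closure (Set.range a)}, C ≤ c := by
    intro c hc
    by_contra hcon
    push_neg at hcon
    have hF0 : 0 ≤ F := by
      have : 1 ≤ C := by omega
      omega
    have h5 : F.toNat ∈ AddSubmonoid.closure (Set.range a) := by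
      apply hc
      have : (c : ℤ) ≤ F := by omega
      omega
    rw [hchar] at h5
    obtain ⟨μ, hμ⟩ := h5
    exact H2 ⟨μ, by rw [← hμ, Int.toNat_of_nonneg hF0]⟩
  have hsInf : sInf {c : ℕ | ∀ m ≥ c, m ∈ AddSubmonoid.closure (Set.range a)} = C :=
    le_antisymm (Nat.sInf_le hCmem) (le_csInf ⟨C, hCmem⟩ hge)
  rw [hsInf, hCF]
  have hA0 : (A 0 : ℤ) = (a ⟨0, hg⟩ : ℤ) := by simp [hA, hg]
  have hsum : (∑ i ∈ Finset.univ.filter (fun i : Fin g => 0 < (i : ℕ)),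
      ((n i : ℤ) - 1) * (a i : ℤ)) = ∑ i ∈ Finset.Ico 1 g, ((N i : ℤ) - 1) * A i := by
    rw [Finset.sum_filter]
    calc ∑ j : Fin g, (if 0 < (j : ℕ) then ((n j : ℤ) - 1) * (a j : ℤ) else 0)
        = ∑ j : Fin g, (fun t : ℕ => if 0 < t then ((N t : ℤ) - 1) * (A t : ℤ) else 0) (j : ℕ) :=
          Finset.sum_congr rfl fun j _ => by simp only [hNval j, hAval j]
      _ = ∑ t ∈ Finset.range g, (if 0 < t then ((N t : ℤ) - 1) * (A t : ℤ) else 0) :=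
          by exact Fin.sum_univ_eq_sum_range (fun t : ℕ => if 0 < t then ((N t : ℤ) - 1) * (A t : ℤ) else 0) g
      _ = ∑ i ∈ Finset.Ico 1 g, ((N i : ℤ) - 1) * (A i : ℤ) := by
          rw [show Finset.Ico 1 g = (Finset.range g).filter (fun t => 0 < t) by
            ext x; simp only [Finset.mem_Ico, Finset.mem_filter, Finset.mem_range]; omega,
            Finset.sum_filter]
  rw [hsum, ← hA0, hF]
end

section
/- Every free numerical semigroup is symmetric. -/
section helpers

private lemma closure_mul_mem {d : ℕ} {s : Set ℕ} {m : ℕ}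
    (h : m ∈ AddSubmonoid.closure ((fun x => d * x) '' s)) :
    ∃ m', m = d * m' ∧ m' ∈ AddSubmonoid.closure s := by
  induction h using AddSubmonoid.closure_induction with
  | mem x hx =>
      obtain ⟨y, hy, rfl⟩ := hx
      exact ⟨y, rfl, AddSubmonoid.subset_closure hy⟩
  | zero => exact ⟨0, by simp, zero_mem _⟩
  | add x y hx hy px py =>
      obtain ⟨x', rfl, hx'⟩ := px
      obtain ⟨y', rfl, hy'⟩ := py
      exact ⟨x' + y', by ring, add_mem hx' hy'⟩

private lemma mul_mem_closure_mul {d : ℕ} {s : Set ℕ} {m : ℕ}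
    (h : m ∈ AddSubmonoid.closure s) :
    d * m ∈ AddSubmonoid.closure ((fun x => d * x) '' s) := by
  induction h using AddSubmonoid.closure_induction with
  | mem x hx => exact AddSubmonoid.subset_closure ⟨x, hx, rfl⟩
  | zero => simpa using zero_mem _
  | add x y hx hy px py => rw [mul_add]; exact add_mem px py

private lemma finset_Iio_castSucc {k : ℕ} (i : Fin k) :
    (Finset.Iio (Fin.castSucc i) : Finset (Fin (k+1))) = (Finset.Iio i).image Fin.castSucc := by
  ext j
  simp only [Finset.mem_Iio, Finset.mem_image]
  constructor
  · intro hj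
    have hj' : (j : ℕ) < (i : ℕ) := hj
    have hjk : (j : ℕ) < k := lt_trans hj' i.isLt
    exact ⟨⟨j, hjk⟩, hj', rfl⟩
  · rintro ⟨j', hj', rfl⟩
    exact Fin.castSucc_lt_castSucc_iff.mpr hj'

private lemma finset_Iic_castSucc {k : ℕ} (i : Fin k) :
    (Finset.Iic (Fin.castSucc i) : Finset (Fin (k+1))) = (Finset.Iic i).image Fin.castSucc := by
  ext j
  simp only [Finset.mem_Iic, Finset.mem_image]
  constructor
  · intro hj
    have hj' : (j : ℕ) ≤ (i : ℕ) := hj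
    have hjk : (j : ℕ) < k := lt_of_le_of_lt hj' i.isLt
    exact ⟨⟨j, hjk⟩, hj', rfl⟩
  · rintro ⟨j', hj', rfl⟩
    exact Fin.castSucc_le_castSucc_iff.mpr hj'

private lemma set_Iio_castSucc {k : ℕ} (i : Fin k) :
    {j : Fin (k+1) | j < Fin.castSucc i} = Fin.castSucc '' {j : Fin k | j < i} := by
  ext j
  simp only [Set.mem_setOf_eq, Set.mem_image]
  constructor
  · intro hj
    have hj' : (j : ℕ) < (i : ℕ) := hj
    have hjk : (j : ℕ) < k := lt_trans hj' i.isLt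
    exact ⟨⟨j, hjk⟩, hj', rfl⟩
  · rintro ⟨j', hj', rfl⟩
    exact Fin.castSucc_lt_castSucc_iff.mpr hj'

private lemma set_Iio_last {k : ℕ} :
    {j : Fin (k+1) | j < Fin.last k} = Set.range Fin.castSucc := by
  ext j
  rw [Fin.range_castSucc]
  simp only [Set.mem_setOf_eq, Fin.lt_def, Fin.val_last]

end helpers

private lemma int_decomp_unique {d aL : ℕ} (hd : 0 < d) (hcop : Nat.Coprime d aL)
    {y j y' j' : ℤ} (hj0 : 0 ≤ j) (hjd : j < d) (hj0' : 0 ≤ j') (hjd' : j' < d)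
    (heq : d * y + j * aL = d * y' + j' * aL) : j = j' ∧ y = y' := by
  have hcopZ : IsCoprime (d : ℤ) (aL : ℤ) := by
    rw [Int.isCoprime_iff_gcd_eq_one]
    simpa [Int.gcd_natCast_natCast] using hcop
  have hdvd : (d : ℤ) ∣ (j - j') * aL := ⟨y' - y, by linarith⟩
  have hdj : (d : ℤ) ∣ (j - j') := hcopZ.dvd_of_dvd_mul_right hdvd
  obtain ⟨c, hc⟩ := hdj
  have hdZ : (0 : ℤ) < d := by exact_mod_cast hd
  have hc0 : c = 0 := by nlinarith [hc]
  rw [hc0, mul_zero] at hc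
  have hj : j = j' := by omega
  subst hj
  refine ⟨rfl, ?_⟩
  have : (d : ℤ) * y = d * y' := by linarith
  exact mul_left_cancel₀ (by positivity) this

private lemma key_s18 : ∀ (g : ℕ) (a : Fin g → ℕ), (∀ i, 0 < a i) →
    Finset.univ.gcd a = 1 →
    ∀ (n : Fin g → ℕ),
    (∀ i : Fin g, 0 < (i : ℕ) →
      (Finset.Iio i).gcd a = n i * (Finset.Iic i).gcd a) →
    (∀ i : Fin g, 0 < (i : ℕ) →
      n i * a i ∈ AddSubmonoid.closure (a '' {j : Fin g | j < i})) →
    ∃ F : ℤ, -1 ≤ F ∧ ∀ x : ℤ,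
      ((∃ m ∈ AddSubmonoid.closure (Set.range a), (m : ℤ) = x) ↔
        ¬ ∃ m ∈ AddSubmonoid.closure (Set.range a), (m : ℤ) = F - x) := by
  intro g
  induction g with
  | zero =>
      intro a _ hgcd
      simp at hgcd
  | succ k ih =>
      intro a hpos hgcd n hn hfree
      rcases Nat.eq_zero_or_pos k with rfl | hk
      · -- g = 1 : the semigroup is all of ℕ
        have h1 : a 0 = 1 := by simpa using hgcd
        have hall : ∀ m : ℕ, m ∈ AddSubmonoid.closure (Set.range a) := by
          intro m
          have : m = m • a 0 := by simp [h1]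
          rw [this]
          exact nsmul_mem (AddSubmonoid.subset_closure (Set.mem_range_self 0)) m
        refine ⟨-1, le_refl _, fun x => ?_⟩
        constructor
        · rintro ⟨m, _, rfl⟩ ⟨m', _, hm'⟩
          omega
        · intro h
          rcases le_or_gt 0 x with hx | hx
          · exact ⟨x.toNat, hall _, by omega⟩
          · exact absurd ⟨(-1 - x).toNat, hall _, by omega⟩ h
      · -- k ≥ 1 : induction step via gluing
        have hLval : 0 < ((Fin.last k : Fin (k+1)) : ℕ) := by simpa using hk
        set d : ℕ := (Finset.Iio (Fin.last k)).gcd a with hd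
        have hdvd : ∀ j : Fin k, d ∣ a (Fin.castSucc j) := fun j =>
          Finset.gcd_dvd (Finset.mem_Iio.mpr (Fin.castSucc_lt_last j))
        have hdpos : 0 < d := Nat.pos_of_dvd_of_pos (hdvd ⟨0, hk⟩) (hpos _)
        set a' : Fin k → ℕ := fun i => a (Fin.castSucc i) / d with ha'
        have haa' : ∀ i, a (Fin.castSucc i) = d * a' i := fun i =>
          (Nat.mul_div_cancel' (hdvd i)).symm
        have hpos' : ∀ i, 0 < a' i := by
          intro i
          have h := hpos (Fin.castSucc i)
          rw [haa' i] at h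
          rcases Nat.eq_zero_or_pos (a' i) with h0 | h1
          · simp [h0] at h
          · exact h1
        have hgcds : ∀ s : Finset (Fin k), (s.image Fin.castSucc).gcd a = d * s.gcd a' := by
          intro s
          rw [Finset.gcd_image]
          have he : a ∘ Fin.castSucc = fun i => d * a' i := funext fun i => haa' i
          rw [he, Finset.gcd_mul_left]
          simp
        have hIioL : Finset.Iio (Fin.last k) = Finset.univ.image Fin.castSucc := by
          rw [Fin.Iio_last_eq_map, Finset.map_eq_image]
          rfl
        have hgcd1 : d = d * Finset.univ.gcd a' := by
          conv_lhs => rw [hd, hIioL, hgcds]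
        have hgcd' : Finset.univ.gcd a' = 1 :=
          Nat.eq_of_mul_eq_mul_left hdpos (by rw [← hgcd1, mul_one])
        have hn' : ∀ i : Fin k, 0 < (i : ℕ) →
            (Finset.Iio i).gcd a' = n (Fin.castSucc i) * (Finset.Iic i).gcd a' := by
          intro i hi
          have h := hn (Fin.castSucc i) (by simpa using hi)
          rw [finset_Iio_castSucc, finset_Iic_castSucc, hgcds, hgcds] at h
          exact Nat.eq_of_mul_eq_mul_left hdpos (by rw [h]; ring)
        have himgset : ∀ s : Set (Fin k),
            a '' (Fin.castSucc '' s) = (fun x => d * x) '' (a' '' s) := by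
          intro s
          rw [← Set.image_comp]
          have he : a ∘ Fin.castSucc = (fun x => d * x) ∘ a' := funext fun i => haa' i
          rw [he, Set.image_comp]
        have hfree' : ∀ i : Fin k, 0 < (i : ℕ) →
            n (Fin.castSucc i) * a' i ∈ AddSubmonoid.closure (a' '' {j : Fin k | j < i}) := by
          intro i hi
          have h := hfree (Fin.castSucc i) (by simpa using hi)
          rw [set_Iio_castSucc, himgset] at h
          obtain ⟨m', hm', hmem⟩ := closure_mul_mem h
          have he : d * (n (Fin.castSucc i) * a' i) = d * m' := by
            rw [← hm', haa' i]; ring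
          rw [Nat.eq_of_mul_eq_mul_left hdpos he]
          exact hmem
        obtain ⟨F₁, hF₁, hSym₁⟩ := ih a' hpos' hgcd' (fun i => n (Fin.castSucc i)) hn' hfree'
        -- coprimality of d and the last generator
        have hIicL : Finset.Iic (Fin.last k) = Finset.univ := by
          ext j; simp [Fin.le_last]
        have hnL : d = n (Fin.last k) := by
          have h := hn (Fin.last k) hLval
          rwa [hIicL, hgcd, mul_one] at h
        have hins : insert (Fin.last k) (Finset.Iio (Fin.last k)) = Finset.univ := by
          rw [Finset.Iio_insert]; exact hIicL
        have hcop : Nat.Coprime d (a (Fin.last k)) := by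
          have h2 : GCDMonoid.gcd (a (Fin.last k)) d = 1 := by
            rw [hd, ← Finset.gcd_insert, hins, hgcd]
          have h3 : Nat.gcd (a (Fin.last k)) d = 1 := h2
          simpa [Nat.Coprime, Nat.gcd_comm] using h3
        -- the last generator lies in the small semigroup
        have haLmem : a (Fin.last k) ∈ AddSubmonoid.closure (Set.range a') := by
          have h := hfree (Fin.last k) hLval
          rw [set_Iio_last] at h
          have himg : a '' Set.range Fin.castSucc = (fun x => d * x) '' (a' '' Set.univ) := by
            rw [← Set.image_univ, himgset]
          rw [himg, Set.image_univ, ← hnL] at h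
          obtain ⟨m', hm', hmem⟩ := closure_mul_mem h
          rwa [Nat.eq_of_mul_eq_mul_left hdpos hm']
        -- decomposition of semigroup elements
        have hdecomp : ∀ m ∈ AddSubmonoid.closure (Set.range a),
            ∃ s ∈ AddSubmonoid.closure (Set.range a'), ∃ t : ℕ, m = d * s + t * a (Fin.last k) := by
          intro m hm
          induction hm using AddSubmonoid.closure_induction with
          | mem x hx =>
              obtain ⟨i, rfl⟩ := hx
              rcases eq_or_ne i (Fin.last k) with rfl | hne
              · exact ⟨0, zero_mem _, 1, by simp⟩
              · obtain ⟨i', rfl⟩ := Fin.exists_castSucc_eq.mpr hne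
                exact ⟨a' i', AddSubmonoid.subset_closure (Set.mem_range_self i'), 0,
                  by simp [haa' i']⟩
          | zero => exact ⟨0, zero_mem _, 0, by simp⟩
          | add x y hx hy px py =>
              obtain ⟨s, hs, t, rfl⟩ := px
              obtain ⟨s', hs', t', rfl⟩ := py
              exact ⟨s + s', add_mem hs hs', t + t', by ring⟩
        have hmemS : ∀ s ∈ AddSubmonoid.closure (Set.range a'), ∀ t : ℕ,
            d * s + t * a (Fin.last k) ∈ AddSubmonoid.closure (Set.range a) := by
          intro s hs t
          refine add_mem ?_ ?_
          · have h1 := mul_mem_closure_mul (d := d) hs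
            refine AddSubmonoid.closure_mono ?_ h1
            rintro _ ⟨x, ⟨i, rfl⟩, rfl⟩
            exact ⟨Fin.castSucc i, by simpa using haa' i⟩
          · have h2 : t • a (Fin.last k) ∈ AddSubmonoid.closure (Set.range a) :=
              nsmul_mem (AddSubmonoid.subset_closure (Set.mem_range_self (Fin.last k))) t
            simpa [smul_eq_mul] using h2
        have hmul_in : ∀ q : ℕ, q * a (Fin.last k) ∈ AddSubmonoid.closure (Set.range a') := by
          intro q
          have h2 : q • a (Fin.last k) ∈ AddSubmonoid.closure (Set.range a') :=
            nsmul_mem haLmem q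
          simpa [smul_eq_mul] using h2
        -- the key decomposition over ℤ
        have claimZ : ∀ x : ℤ,
            (∃ m ∈ AddSubmonoid.closure (Set.range a), (m : ℤ) = x) ↔
            ∃ y j : ℤ, x = d * y + j * a (Fin.last k) ∧ 0 ≤ j ∧ j < d ∧
              (∃ m₁ ∈ AddSubmonoid.closure (Set.range a'), (m₁ : ℤ) = y) := by
          intro x
          constructor
          · rintro ⟨m, hm, rfl⟩
            obtain ⟨s, hs, t, rfl⟩ := hdecomp m hm
            refine ⟨((s + (t / d) * a (Fin.last k) : ℕ) : ℤ), ((t % d : ℕ) : ℤ), ?_,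
              by positivity, ?_, ⟨s + (t / d) * a (Fin.last k),
                add_mem hs (hmul_in _), rfl⟩⟩
            · have ht : (t : ℤ) = d * (t / d) + (t % d) := by
                exact_mod_cast (Nat.div_add_mod t d).symm
              push_cast
              linear_combination (a (Fin.last k) : ℤ) * ht
            · exact_mod_cast Nat.mod_lt t hdpos
          · rintro ⟨y, j, rfl, hj0, hjd, m₁, hm₁, rfl⟩
            refine ⟨d * m₁ + j.toNat * a (Fin.last k), hmemS m₁ hm₁ j.toNat, ?_⟩
            push_cast [Int.toNat_of_nonneg hj0]
            ring
        have hcopZ : IsCoprime (d : ℤ) (a (Fin.last k) : ℤ) := by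
          rw [Int.isCoprime_iff_gcd_eq_one]
          simpa [Int.gcd_natCast_natCast] using hcop
        have hdZ : (0 : ℤ) < d := by exact_mod_cast hdpos
        refine ⟨(d : ℤ) * F₁ + ((d : ℤ) - 1) * a (Fin.last k), ?_, ?_⟩
        · have haL1 : (1 : ℤ) ≤ a (Fin.last k) := by exact_mod_cast hpos (Fin.last k)
          nlinarith
        · intro x
          obtain ⟨p, q, hpq⟩ := hcopZ
          have hx : x = d * (x * p + ((x * q) / d) * a (Fin.last k))
              + ((x * q) % d) * a (Fin.last k) := by
            have h1 : (d : ℤ) * ((x * q) / d) + (x * q) % d = x * q := Int.mul_ediv_add_emod _ _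
            calc x = x * (p * d + q * a (Fin.last k)) := by rw [hpq, mul_one]
            _ = d * (x * p) + (x * q) * a (Fin.last k) := by ring
            _ = d * (x * p) + ((d : ℤ) * ((x * q) / d) + (x * q) % d) * a (Fin.last k) := by
                  rw [h1]
            _ = _ := by ring
          set y : ℤ := x * p + ((x * q) / d) * a (Fin.last k) with hy
          set j : ℤ := (x * q) % d with hj
          have hj0 : 0 ≤ j := Int.emod_nonneg _ (ne_of_gt hdZ)
          have hjd : j < d := Int.emod_lt_of_pos _ hdZ
          have h1 : (∃ m ∈ AddSubmonoid.closure (Set.range a), (m : ℤ) = x) ↔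
              (∃ m ∈ AddSubmonoid.closure (Set.range a'), (m : ℤ) = y) := by
            rw [claimZ]
            constructor
            · rintro ⟨y', j', hx', hj0', hjd', hy'⟩
              obtain ⟨hje, hye⟩ := int_decomp_unique hdpos hcop hj0' hjd' hj0 hjd
                (by rw [← hx', ← hx])
              exact hye ▸ hy'
            · intro hmem
              exact ⟨y, j, hx, hj0, hjd, hmem⟩
          have hFx : (d : ℤ) * F₁ + ((d : ℤ) - 1) * a (Fin.last k) - x =
              d * (F₁ - y) + ((d : ℤ) - 1 - j) * a (Fin.last k) := by
            rw [hx]; ring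
          have h2 : (∃ m ∈ AddSubmonoid.closure (Set.range a),
              (m : ℤ) = (d : ℤ) * F₁ + ((d : ℤ) - 1) * a (Fin.last k) - x) ↔
              (∃ m ∈ AddSubmonoid.closure (Set.range a'), (m : ℤ) = F₁ - y) := by
            rw [claimZ]
            constructor
            · rintro ⟨y', j', hx', hj0', hjd', hy'⟩
              obtain ⟨hje, hye⟩ := int_decomp_unique (y := y') (j := j')
                (y' := F₁ - y) (j' := (d : ℤ) - 1 - j) hdpos hcop hj0' hjd'
                (by omega) (by omega) (by rw [← hx', hFx])
              exact hye ▸ hy'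
            · intro hmem
              exact ⟨F₁ - y, (d : ℤ) - 1 - j, hFx, by omega, by omega, hmem⟩
          rw [h1, h2]
          exact hSym₁ y

/-- Every free numerical semigroup is symmetric. -/
theorem free_semigroup_symmetric (g : ℕ) (hg : 0 < g)
    (a : Fin g → ℕ) (hpos : ∀ i, 0 < a i)
    (hgcd : Finset.univ.gcd a = 1)
    (n : Fin g → ℕ)
    (hn : ∀ i : Fin g, 0 < (i : ℕ) →
      (Finset.Iio i).gcd a = n i * (Finset.Iic i).gcd a)
    (hfree : ∀ i : Fin g, 0 < (i : ℕ) →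
      n i * a i ∈ AddSubmonoid.closure (a '' {j : Fin g | j < i})) :
    ∀ x : ℤ,
      (∃ m ∈ AddSubmonoid.closure (Set.range a), (m : ℤ) = x) ↔
      ¬ ∃ m ∈ AddSubmonoid.closure (Set.range a),
        (m : ℤ) = ((sInf {c : ℕ | ∀ m' ≥ c,
          m' ∈ AddSubmonoid.closure (Set.range a)} : ℕ) : ℤ) - 1 - x := by

  obtain ⟨F, hF, hSym⟩ := key_s18 g a hpos hgcd n hn hfree
  have hFnot : ¬ ∃ m ∈ AddSubmonoid.closure (Set.range a), (m : ℤ) = F := by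
    intro hFin
    exact (hSym F).mp hFin ⟨0, zero_mem _, by omega⟩
  have hset : (F + 1).toNat ∈
      {c : ℕ | ∀ m' ≥ c, m' ∈ AddSubmonoid.closure (Set.range a)} := by
    intro m hm
    have hm' : F < (m : ℤ) := by omega
    have hmem : ∃ m' ∈ AddSubmonoid.closure (Set.range a), ((m' : ℕ) : ℤ) = (m : ℤ) := by
      rw [hSym]
      rintro ⟨m'', hm'', he⟩
      omega
    obtain ⟨m', hm'S, he⟩ := hmem
    have : m' = m := by exact_mod_cast he
    rwa [← this]
  have hsInf_le : sInf {c : ℕ | ∀ m' ≥ c, m' ∈ AddSubmonoid.closure (Set.range a)} ≤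
      (F + 1).toNat := Nat.sInf_le hset
  have hsInf_mem := Nat.sInf_mem
    (⟨_, hset⟩ : {c : ℕ | ∀ m' ≥ c, m' ∈ AddSubmonoid.closure (Set.range a)}.Nonempty)
  have hC : ((sInf {c : ℕ | ∀ m' ≥ c, m' ∈ AddSubmonoid.closure (Set.range a)} : ℕ) : ℤ)
      = F + 1 := by
    rcases lt_or_ge F 0 with hF0 | hF0
    · have hFe : F = -1 := le_antisymm (by omega) hF
      omega
    · by_contra hne
      have hlt : sInf {c : ℕ | ∀ m' ≥ c, m' ∈ AddSubmonoid.closure (Set.range a)} ≤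
          F.toNat := by omega
      have hmem : F.toNat ∈ AddSubmonoid.closure (Set.range a) := hsInf_mem F.toNat hlt
      exact hFnot ⟨F.toNat, hmem, by omega⟩
  intro x
  have he : ((sInf {c : ℕ | ∀ m' ≥ c, m' ∈ AddSubmonoid.closure (Set.range a)} : ℕ) : ℤ)
      - 1 - x = F - x := by rw [hC]; ring
  rw [he]
  exact hSym x
end

section
/- For every n ≥ 1, the numerical semigroup S_n = ⟨6, 6n+4, 6n+8, 12n+11, 12n+15⟩ is not a complete intersection: the pairwise sums fail Delorme's condition because the quantities m_L = min(⟨L⟩ ∩ ⟨G\L⟩) for the five singleton subsets L of the generating set, namely 12n+12, 12n+8, 12n+16, 24n+22, 24n+30, are pairwise distinct. -/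
lemma mem_closure_single (a m : ℕ) :
    m ∈ AddSubmonoid.closure ({a} : Set ℕ) ↔ ∃ k : ℕ, m = k * a := by
  rw [AddSubmonoid.mem_closure_singleton]
  constructor
  · rintro ⟨k, rfl⟩; exact ⟨k, by simp [smul_eq_mul]⟩
  · rintro ⟨k, rfl⟩; exact ⟨k, by simp [smul_eq_mul]⟩

lemma mem_closure4 (a b c d m : ℕ) :
    m ∈ AddSubmonoid.closure ({a, b, c, d} : Set ℕ) ↔
      ∃ p q r s : ℕ, m = p*a + q*b + r*c + s*d := by
  constructor
  · intro h
    induction h using AddSubmonoid.closure_induction with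
    | mem x hx =>
      rcases hx with rfl | rfl | rfl | rfl
      · exact ⟨1, 0, 0, 0, by ring⟩
      · exact ⟨0, 1, 0, 0, by ring⟩
      · exact ⟨0, 0, 1, 0, by ring⟩
      · exact ⟨0, 0, 0, 1, by ring⟩
    | zero => exact ⟨0, 0, 0, 0, by ring⟩
    | add x y hx hy ihx ihy =>
      obtain ⟨p, q, r, s, rfl⟩ := ihx
      obtain ⟨p', q', r', s', rfl⟩ := ihy
      exact ⟨p+p', q+q', r+r', s+s', by ring⟩
  · rintro ⟨p, q, r, s, rfl⟩
    have key : ∀ (k x : ℕ), x ∈ ({a,b,c,d} : Set ℕ) →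
        k * x ∈ AddSubmonoid.closure ({a,b,c,d} : Set ℕ) := by
      intro k x hx
      simpa [smul_eq_mul] using
        AddSubmonoid.nsmul_mem _ (AddSubmonoid.subset_closure hx) k
    exact add_mem (add_mem (add_mem (key p a (by simp)) (key q b (by simp)))
      (key r c (by simp))) (key s d (by simp))

private lemma le_sum4_1 (A B C D : ℕ) : A ≤ A + B + C + D := by omega
private lemma le_sum4_2 (A B C D : ℕ) : B ≤ A + B + C + D := by omega
private lemma le_sum4_3 (A B C D : ℕ) : C ≤ A + B + C + D := by omega
private lemma le_sum4_4 (A B C D : ℕ) : D ≤ A + B + C + D := by omega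

private lemma coeff_pos_le {b : ℕ} (X : ℕ) (hb : 1 ≤ b) : X ≤ b * X :=
  Nat.le_mul_of_pos_left X hb

private lemma coeff_two_le {b : ℕ} (X : ℕ) (hb : 2 ≤ b) : 2 * X ≤ b * X :=
  Nat.mul_le_mul_right X hb

/-- (Teragaito's examples.) For `n ≥ 1` and the generating set
`G = {6, 6n+4, 6n+8, 12n+11, 12n+15}`, the quantities
`m_L = min((⟨L⟩ ∩ ⟨G∖L⟩) ∖ {0})` for the five singleton subsets `L` are
`12n+12, 12n+8, 12n+16, 24n+22, 24n+30`, and they are pairwise distinct; hence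
by Delorme's algorithm `S_n = ⟨6, 6n+4, 6n+8, 12n+11, 12n+15⟩` is not a
complete intersection. -/
theorem teragaito_not_CI (n : ℕ) (hn : 1 ≤ n) :
    IsLeast {m : ℕ | m ≠ 0 ∧ m ∈ AddSubmonoid.closure ({6} : Set ℕ) ∧
        m ∈ AddSubmonoid.closure ({6*n+4, 6*n+8, 12*n+11, 12*n+15} : Set ℕ)}
      (12*n+12) ∧
    IsLeast {m : ℕ | m ≠ 0 ∧ m ∈ AddSubmonoid.closure ({6*n+4} : Set ℕ) ∧
        m ∈ AddSubmonoid.closure ({6, 6*n+8, 12*n+11, 12*n+15} : Set ℕ)}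
      (12*n+8) ∧
    IsLeast {m : ℕ | m ≠ 0 ∧ m ∈ AddSubmonoid.closure ({6*n+8} : Set ℕ) ∧
        m ∈ AddSubmonoid.closure ({6, 6*n+4, 12*n+11, 12*n+15} : Set ℕ)}
      (12*n+16) ∧
    IsLeast {m : ℕ | m ≠ 0 ∧ m ∈ AddSubmonoid.closure ({12*n+11} : Set ℕ) ∧
        m ∈ AddSubmonoid.closure ({6, 6*n+4, 6*n+8, 12*n+15} : Set ℕ)}
      (24*n+22) ∧
    IsLeast {m : ℕ | m ≠ 0 ∧ m ∈ AddSubmonoid.closure ({12*n+15} : Set ℕ) ∧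
        m ∈ AddSubmonoid.closure ({6, 6*n+4, 6*n+8, 12*n+11} : Set ℕ)}
      (24*n+30) ∧
    ([12*n+12, 12*n+8, 12*n+16, 24*n+22, 24*n+30] : List ℕ).Pairwise (· ≠ ·) := by
  refine ⟨⟨⟨by omega, ?_, ?_⟩, ?_⟩, ⟨⟨by omega, ?_, ?_⟩, ?_⟩, ⟨⟨by omega, ?_, ?_⟩, ?_⟩,
    ⟨⟨by omega, ?_, ?_⟩, ?_⟩, ⟨⟨by omega, ?_, ?_⟩, ?_⟩, ?_⟩
  -- Part 1: m = 12n+12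
  · exact (mem_closure_single _ _).2 ⟨2*n+2, by ring⟩
  · exact (mem_closure4 _ _ _ _ _).2 ⟨1, 1, 0, 0, by ring⟩
  · rintro m ⟨hm0, hm1, hm2⟩
    obtain ⟨u, rfl⟩ := (mem_closure_single _ _).1 hm1
    obtain ⟨p, q, r, s, heq⟩ := (mem_closure4 _ _ _ _ _).1 hm2
    rcases Nat.eq_zero_or_pos r with hr | hr
    · rcases Nat.eq_zero_or_pos s with hs | hs
      · subst hr hs
        simp only [Nat.zero_mul, Nat.add_zero] at heq
        rcases (show (p = 0 ∧ q = 0) ∨ (p = 1 ∧ q = 0) ∨ (p = 0 ∧ q = 1) ∨ 2 ≤ p + q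
            by omega) with ⟨rfl, rfl⟩ | ⟨rfl, rfl⟩ | ⟨rfl, rfl⟩ | hpq
        · simp at heq; omega
        · simp only [Nat.one_mul, Nat.zero_mul, Nat.add_zero] at heq; omega
        · simp only [Nat.one_mul, Nat.zero_mul, Nat.zero_add] at heq; omega
        · have h : 12*n+8 ≤ u * 6 := by
            calc 12*n+8 = 2*(6*n+4) := by ring
              _ ≤ (p+q)*(6*n+4) := Nat.mul_le_mul_right _ hpq
              _ = p*(6*n+4) + q*(6*n+4) := by ring
              _ ≤ p*(6*n+4) + q*(6*n+8) :=
                  Nat.add_le_add_left (Nat.mul_le_mul_left q (by omega)) _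
              _ = u * 6 := heq.symm
          omega
      · have h : 12*n+15 ≤ u * 6 := by
          calc 12*n+15 ≤ s*(12*n+15) := coeff_pos_le _ hs
            _ ≤ _ := le_sum4_4 _ _ _ _
            _ = u * 6 := heq.symm
        omega
    · have h : 12*n+11 ≤ u * 6 := by
        calc 12*n+11 ≤ r*(12*n+11) := coeff_pos_le _ hr
          _ ≤ _ := le_sum4_3 _ _ _ _
          _ = u * 6 := heq.symm
      omega
  -- Part 2: m = 12n+8
  · exact (mem_closure_single _ _).2 ⟨2, by ring⟩
  · exact (mem_closure4 _ _ _ _ _).2 ⟨n, 1, 0, 0, by ring⟩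
  · rintro m ⟨hm0, hm1, hm2⟩
    obtain ⟨k, rfl⟩ := (mem_closure_single _ _).1 hm1
    obtain ⟨a, b, c, d, heq⟩ := (mem_closure4 _ _ _ _ _).1 hm2
    have hk : 1 ≤ k := by
      rcases Nat.eq_zero_or_pos k with rfl | h
      · simp at hm0
      · exact h
    rcases (show k = 1 ∨ 2 ≤ k by omega) with rfl | hk2
    · exfalso
      simp only [Nat.one_mul] at heq
      rcases Nat.eq_zero_or_pos b with hb | hb
      · rcases Nat.eq_zero_or_pos c with hc | hc
        · rcases Nat.eq_zero_or_pos d with hd | hd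
          · subst hb hc hd
            simp only [Nat.zero_mul, Nat.add_zero] at heq
            omega
          · have h : 12*n+15 ≤ 6*n+4 := by
              calc 12*n+15 ≤ d*(12*n+15) := coeff_pos_le _ hd
                _ ≤ _ := le_sum4_4 _ _ _ _
                _ = 6*n+4 := heq.symm
            omega
        · have h : 12*n+11 ≤ 6*n+4 := by
            calc 12*n+11 ≤ c*(12*n+11) := coeff_pos_le _ hc
              _ ≤ _ := le_sum4_3 _ _ _ _
              _ = 6*n+4 := heq.symm
          omega
      · have h : 6*n+8 ≤ 6*n+4 := by
          calc 6*n+8 ≤ b*(6*n+8) := coeff_pos_le _ hb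
            _ ≤ _ := le_sum4_2 _ _ _ _
            _ = 6*n+4 := heq.symm
        omega
    · calc 12*n+8 = 2*(6*n+4) := by ring
        _ ≤ k*(6*n+4) := coeff_two_le _ hk2
  -- Part 3: m = 12n+16
  · exact (mem_closure_single _ _).2 ⟨2, by ring⟩
  · exact (mem_closure4 _ _ _ _ _).2 ⟨n+2, 1, 0, 0, by ring⟩
  · rintro m ⟨hm0, hm1, hm2⟩
    obtain ⟨k, rfl⟩ := (mem_closure_single _ _).1 hm1
    obtain ⟨a, b, c, d, heq⟩ := (mem_closure4 _ _ _ _ _).1 hm2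
    have hk : 1 ≤ k := by
      rcases Nat.eq_zero_or_pos k with rfl | h
      · simp at hm0
      · exact h
    rcases (show k = 1 ∨ 2 ≤ k by omega) with rfl | hk2
    · exfalso
      simp only [Nat.one_mul] at heq
      rcases Nat.eq_zero_or_pos c with hc | hc
      · rcases Nat.eq_zero_or_pos d with hd | hd
        · subst hc hd
          simp only [Nat.zero_mul, Nat.add_zero] at heq
          rcases (show b = 0 ∨ b = 1 ∨ 2 ≤ b by omega) with rfl | rfl | hb2
          · simp only [Nat.zero_mul, Nat.add_zero] at heq; omega
          · simp only [Nat.one_mul] at heq; omega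
          · have h : 12*n+8 ≤ 6*n+8 := by
              calc 12*n+8 = 2*(6*n+4) := by ring
                _ ≤ b*(6*n+4) := coeff_two_le _ hb2
                _ ≤ a*6 + b*(6*n+4) := Nat.le_add_left _ _
                _ = 6*n+8 := heq.symm
            omega
        · have h : 12*n+15 ≤ 6*n+8 := by
            calc 12*n+15 ≤ d*(12*n+15) := coeff_pos_le _ hd
              _ ≤ _ := le_sum4_4 _ _ _ _
              _ = 6*n+8 := heq.symm
          omega
      · have h : 12*n+11 ≤ 6*n+8 := by
          calc 12*n+11 ≤ c*(12*n+11) := coeff_pos_le _ hc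
            _ ≤ _ := le_sum4_3 _ _ _ _
            _ = 6*n+8 := heq.symm
        omega
    · calc 12*n+16 = 2*(6*n+8) := by ring
        _ ≤ k*(6*n+8) := coeff_two_le _ hk2
  -- Part 4: m = 24n+22
  · exact (mem_closure_single _ _).2 ⟨2, by ring⟩
  · exact (mem_closure4 _ _ _ _ _).2 ⟨3*n+3, 1, 0, 0, by ring⟩
  · rintro m ⟨hm0, hm1, hm2⟩
    obtain ⟨k, rfl⟩ := (mem_closure_single _ _).1 hm1
    obtain ⟨a, b, c, d, heq⟩ := (mem_closure4 _ _ _ _ _).1 hm2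
    have hk : 1 ≤ k := by
      rcases Nat.eq_zero_or_pos k with rfl | h
      · simp at hm0
      · exact h
    rcases (show k = 1 ∨ 2 ≤ k by omega) with rfl | hk2
    · exfalso
      simp only [Nat.one_mul] at heq
      rcases Nat.eq_zero_or_pos d with hd | hd
      · subst hd
        simp only [Nat.zero_mul, Nat.add_zero] at heq
        rw [show b*(6*n+4) = 2*(b*(3*n+2)) by ring,
            show c*(6*n+8) = 2*(c*(3*n+4)) by ring] at heq
        generalize b*(3*n+2) = B at heq
        generalize c*(3*n+4) = C at heq
        omega
      · have h : 12*n+15 ≤ 12*n+11 := by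
          calc 12*n+15 ≤ d*(12*n+15) := coeff_pos_le _ hd
            _ ≤ _ := le_sum4_4 _ _ _ _
            _ = 12*n+11 := heq.symm
        omega
    · calc 24*n+22 = 2*(12*n+11) := by ring
        _ ≤ k*(12*n+11) := coeff_two_le _ hk2
  -- Part 5: m = 24n+30
  · exact (mem_closure_single _ _).2 ⟨2, by ring⟩
  · exact (mem_closure4 _ _ _ _ _).2 ⟨2*n+3, 1, 1, 0, by ring⟩
  · rintro m ⟨hm0, hm1, hm2⟩
    obtain ⟨k, rfl⟩ := (mem_closure_single _ _).1 hm1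
    obtain ⟨a, b, c, d, heq⟩ := (mem_closure4 _ _ _ _ _).1 hm2
    have hk : 1 ≤ k := by
      rcases Nat.eq_zero_or_pos k with rfl | h
      · simp at hm0
      · exact h
    rcases (show k = 1 ∨ 2 ≤ k by omega) with rfl | hk2
    · exfalso
      simp only [Nat.one_mul] at heq
      rcases (show d = 0 ∨ d = 1 ∨ 2 ≤ d by omega) with rfl | rfl | hd2
      · simp only [Nat.zero_mul, Nat.add_zero] at heq
        rw [show b*(6*n+4) = 2*(b*(3*n+2)) by ring,
            show c*(6*n+8) = 2*(c*(3*n+4)) by ring] at heq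
        generalize b*(3*n+2) = B at heq
        generalize c*(3*n+4) = C at heq
        omega
      · simp only [Nat.one_mul] at heq
        have hB : b*(6*n+4) = 0 ∨ 6*n+4 ≤ b*(6*n+4) := by
          rcases Nat.eq_zero_or_pos b with rfl | hb
          · left; simp
          · right; exact coeff_pos_le _ hb
        have hC : c*(6*n+8) = 0 ∨ 6*n+8 ≤ c*(6*n+8) := by
          rcases Nat.eq_zero_or_pos c with rfl | hc
          · left; simp
          · right; exact coeff_pos_le _ hc
        generalize b*(6*n+4) = B at heq hB
        generalize c*(6*n+8) = C at heq hC
        omega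
      · have h : 24*n+22 ≤ 12*n+15 := by
          calc 24*n+22 = 2*(12*n+11) := by ring
            _ ≤ d*(12*n+11) := coeff_two_le _ hd2
            _ ≤ _ := le_sum4_4 _ _ _ _
            _ = 12*n+15 := heq.symm
        omega
    · calc 24*n+30 = 2*(12*n+15) := by ring
        _ ≤ k*(12*n+15) := coeff_two_le _ hk2
  -- Pairwise distinct
  · refine .cons ?_ (.cons ?_ (.cons ?_ (.cons ?_ (.cons ?_ .nil)))) <;> intro x hx <;>
      simp only [List.mem_cons, List.not_mem_nil, or_false] at hx <;> omega
end
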